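/- arXiv:1303.0074 — 6 statements merged into one kernel-verified Lean document; each statement's English description precedes it below -/
import Mathlib

section
/- Let n > 1 and m ≥ 1. Suppose α : 𝔭 → W = S^m(ℂ^{n+1}) is an ℝ-linear map satisfying (i) ρ_m(ξ_u)α(ξ_v) = ρ_m(ξ_v)α(ξ_u) for all u, v ∈ ℂⁿ, and (ii) Σ_{j=1}^n ( ρ_m(ξ_{e_j})α(ξ_{e_j}) + ρ_m(ξ_{i e_j})α(ξ_{i e_j}) ) = 0. Then α is conjugate-ℂ-linear, i.e. α(ξ_{iv}) = −i·α(ξ_v) for all v ∈ ℂⁿ, and α takes values in the top component W_m = S^m(V_1). -/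
open MvPolynomial

noncomputable section

/-- The matrix `ξ_v⁺ = [[0, v],[0, 0]]` in block form. -/
def xiP (n : ℕ) (v : Fin n → ℂ) : Matrix (Fin (n+1)) (Fin (n+1)) ℂ :=
  Matrix.of fun i j => if h : (i : ℕ) < n ∧ j = Fin.last n then v ⟨i, h.1⟩ else 0

/-- The matrix `ξ_v⁻ = [[0, 0],[v*, 0]]` in block form. -/
def xiM (n : ℕ) (v : Fin n → ℂ) : Matrix (Fin (n+1)) (Fin (n+1)) ℂ :=
  Matrix.of fun i j =>
    if h : i = Fin.last n ∧ (j : ℕ) < n then (starRingEnd ℂ) (v ⟨j, h.2⟩) else 0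

/-- The matrix `ξ_v = [[0, v],[v*, 0]]` in block form. -/
def xi (n : ℕ) (v : Fin n → ℂ) : Matrix (Fin (n+1)) (Fin (n+1)) ℂ := xiP n v + xiM n v

/-- The derived representation of `gl(n+1, ℂ)` on `W = S^m(ℂ^{n+1})`, realized on
the polynomial ring `ℂ[x_1, …, x_{n+1}]` (a vector `v` corresponds to the linear
form `Σ v_i x_i` and the symmetric product to the product of polynomials, so that
`(u+w)^j = Σ binom(j,i) u^i w^{j-i}`); it acts by derivations. -/
def rho (n : ℕ) (M : Matrix (Fin (n+1)) (Fin (n+1)) ℂ) :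
    MvPolynomial (Fin (n+1)) ℂ →ₗ[ℂ] MvPolynomial (Fin (n+1)) ℂ :=
  ∑ i, ∑ j, M j i • ((LinearMap.mulLeft ℂ (X j)) ∘ₗ (pderiv i).toLinearMap)

/-- The component `W_k = S^k(V_1)·e_{n+1}^{m-k}` of `W = S^m(ℂ^{n+1})`: the span of
monomials of total degree `m` with degree `m - k` in the last variable. -/
def Wcomp (n m k : ℕ) : Submodule ℂ (MvPolynomial (Fin (n+1)) ℂ) :=
  Submodule.span ℂ {p | ∃ d : Fin (n+1) →₀ ℕ,
    (∑ i, d i) = m ∧ d (Fin.last n) = m - k ∧ p = monomial d 1}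

lemma coeff_X_mul_pderiv {N : ℕ} (i : Fin N) (d : Fin N →₀ ℕ) (p : MvPolynomial (Fin N) ℂ) :
    coeff d (X i * pderiv i p) = (d i : ℂ) * coeff d p := by
  have key : ∀ (s : Fin N →₀ ℕ) (a : ℂ),
      X i * pderiv i (monomial s a) = monomial s ((s i : ℂ) * a) := by
    intro s a
    rw [pderiv_monomial, X, monomial_mul]
    by_cases h : s i = 0
    · simp [h]
    · have hss : Finsupp.single i 1 + (s - Finsupp.single i 1) = s := by
        ext j
        by_cases hj : j = i
        · subst hj; simp [Finsupp.single_apply, Finsupp.tsub_apply]; omega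
        · simp [Finsupp.single_apply, Finsupp.tsub_apply, (Ne.symm hj : ¬ i = j)]
      rw [hss]; congr 1; ring
  induction p using MvPolynomial.induction_on' with
  | monomial s a =>
    rw [key, coeff_monomial, coeff_monomial]
    by_cases hs : s = d
    · subst hs; simp
    · simp [hs]
  | add p q hp hq => simp [mul_add, coeff_add, hp, hq, mul_add]

lemma euler_id {N m : ℕ} (p : MvPolynomial (Fin N) ℂ) (hp : p.IsHomogeneous m) :
    C (m : ℂ) * p = ∑ i, X i * pderiv i p := by
  apply MvPolynomial.ext
  intro d
  rw [coeff_C_mul, coeff_sum]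
  simp only [coeff_X_mul_pderiv]
  rw [← Finset.sum_mul]
  by_cases h : coeff d p = 0
  · simp [h]
  · have hd : d.degree = m := by
      by_contra hne; exact h (hp.coeff_eq_zero hne)
    have hsum : ∑ i, (d i : ℂ) = (m : ℂ) := by
      rw [← hd, Finsupp.degree]
      rw [← Finset.sum_subset (Finset.subset_univ d.support)
        (fun x _ hx => by simpa using (Finsupp.notMem_support_iff.mp hx))]
      push_cast
      exact (Nat.cast_sum d.support (fun x => d x)).symm
    rw [hsum]

def Lf (n : ℕ) (v : Fin n → ℂ) : MvPolynomial (Fin (n+1)) ℂ :=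
  ∑ j : Fin n, C (v j) * X j.castSucc

def Dop (n : ℕ) (v : Fin n → ℂ) (p : MvPolynomial (Fin (n+1)) ℂ) : MvPolynomial (Fin (n+1)) ℂ :=
  ∑ j : Fin n, C ((starRingEnd ℂ) (v j)) * pderiv j.castSucc p

lemma xi_castSucc (n : ℕ) (v : Fin n → ℂ) (j : Fin n) (i : Fin (n+1)) :
    xi n v j.castSucc i = if i = Fin.last n then v j else 0 := by
  have hlt : ((j.castSucc : Fin (n+1)) : ℕ) < n := by simp
  simp only [xi, xiP, xiM, Matrix.add_apply, Matrix.of_apply]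
  by_cases hi : i = Fin.last n
  · subst hi
    rw [if_pos rfl, dif_pos ⟨hlt, rfl⟩, dif_neg (fun hc => absurd hc.2 (by simp)), add_zero]
    exact congrArg v (Fin.ext (by simp))
  · rw [if_neg hi, dif_neg (fun hc => hi hc.2),
      dif_neg (fun hc => by have := j.isLt; simp [Fin.ext_iff] at hc; omega), add_zero]

lemma xi_last (n : ℕ) (v : Fin n → ℂ) (i : Fin (n+1)) :
    xi n v (Fin.last n) i
      = if h : (i : ℕ) < n then (starRingEnd ℂ) (v ⟨i, h⟩) else 0 := by
  simp only [xi, xiP, xiM, Matrix.add_apply, Matrix.of_apply]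
  rw [dif_neg (fun hc => by have := hc.1; simp at this), zero_add]
  by_cases hi : (i : ℕ) < n <;> simp [hi]

lemma rho_xi_apply (n : ℕ) (v : Fin n → ℂ) (p : MvPolynomial (Fin (n+1)) ℂ) :
    rho n (xi n v) p = Lf n v * pderiv (Fin.last n) p + X (Fin.last n) * Dop n v p := by
  have h1 : rho n (xi n v) p
      = ∑ i, ∑ j, (xi n v) j i • (X j * pderiv i p) := by
    simp [rho, LinearMap.sum_apply, LinearMap.smul_apply, LinearMap.mulLeft_apply]
  rw [h1]
  have h2 : ∀ i : Fin (n+1), (∑ j, (xi n v) j i • (X j * pderiv i p))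
      = (if i = Fin.last n then Lf n v * pderiv i p else 0)
        + (if h : (i:ℕ) < n then (starRingEnd ℂ) (v ⟨i, h⟩) • (X (Fin.last n) * pderiv i p) else 0) := by
    intro i
    rw [Fin.sum_univ_castSucc (f := fun j => (xi n v) j i • (X j * pderiv i p))]
    congr 1
    · by_cases hi : i = Fin.last n
      · subst hi
        rw [if_pos rfl, Lf, Finset.sum_mul]
        apply Finset.sum_congr rfl
        intro j _
        rw [xi_castSucc, if_pos rfl, smul_eq_C_mul, mul_assoc]
      · rw [if_neg hi]
        apply Finset.sum_eq_zero
        intro j _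
        rw [xi_castSucc, if_neg hi, zero_smul]
    · rw [xi_last]
      by_cases hi : (i:ℕ) < n <;> simp [hi]
  rw [Finset.sum_congr rfl (fun i _ => h2 i), Finset.sum_add_distrib]
  congr 1
  · rw [Finset.sum_ite_eq' Finset.univ (Fin.last n)
      (fun i => Lf n v * pderiv i p), if_pos (Finset.mem_univ _)]
  · rw [Fin.sum_univ_castSucc (f := fun i => if h : (i:ℕ) < n then (starRingEnd ℂ) (v ⟨i, h⟩) • (X (Fin.last n) * pderiv i p) else 0)]
    rw [dif_neg (by simp), add_zero, Dop, Finset.mul_sum]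
    apply Finset.sum_congr rfl
    intro i _
    rw [dif_pos (by simp)]
    have hv : (⟨((i.castSucc : Fin (n+1)) : ℕ), by simp⟩ : Fin n) = i := Fin.ext (by simp)
    rw [hv, smul_eq_C_mul]
    ring

lemma Lf_smul_I (n : ℕ) (v : Fin n → ℂ) :
    Lf n (Complex.I • v) = C Complex.I * Lf n v := by
  simp only [Lf, Finset.mul_sum, Pi.smul_apply, smul_eq_mul, map_mul, mul_assoc]

lemma Dop_smul_I (n : ℕ) (v : Fin n → ℂ) (p : MvPolynomial (Fin (n+1)) ℂ) :
    Dop n (Complex.I • v) p = -(C Complex.I * Dop n v p) := by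
  simp only [Dop, Finset.mul_sum, ← Finset.sum_neg_distrib]
  apply Finset.sum_congr rfl
  intro j _
  simp only [Pi.smul_apply, smul_eq_mul, map_mul, Complex.conj_I]
  push_cast [map_mul, map_neg]
  ring

lemma Lf_single (n : ℕ) (j : Fin n) : Lf n (Pi.single j 1) = X j.castSucc := by
  rw [Lf, Finset.sum_eq_single j]
  · simp
  · intro k _ hk; simp [Pi.single_eq_of_ne hk]
  · intro h; exact absurd (Finset.mem_univ j) h

lemma Dop_single (n : ℕ) (j : Fin n) (p : MvPolynomial (Fin (n+1)) ℂ) :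
    Dop n (Pi.single j 1) p = pderiv j.castSucc p := by
  rw [Dop, Finset.sum_eq_single j]
  · simp
  · intro k _ hk; simp [Pi.single_eq_of_ne hk]
  · intro h; exact absurd (Finset.mem_univ j) h

lemma Dop_sub_C_mul (n : ℕ) (u : Fin n → ℂ) (p q : MvPolynomial (Fin (n+1)) ℂ) (a : ℂ) :
    Dop n u (p - C a * q) = Dop n u p - C a * Dop n u q := by
  simp only [Dop, map_sub, pderiv_C_mul, mul_sub, Finset.sum_sub_distrib, Finset.mul_sum]
  rw [sub_right_inj]
  apply Finset.sum_congr rfl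
  intro j _
  ring

/-- If `α : 𝔭 → W = S^m(ℂ^{n+1})` is ℝ-linear, symmetric (`ρ_m(ξ_u)α(ξ_v) =
ρ_m(ξ_v)α(ξ_u)`) and trace free, then `α` is conjugate-ℂ-linear and takes values
in the top component `W_m = S^m(V_1)`. -/
theorem eichler_shimura_harmonic (n m : ℕ) (hn : 1 < n) (hm : 1 ≤ m)
    (α : (Fin n → ℂ) → MvPolynomial (Fin (n+1)) ℂ)
    (hW : ∀ v, α v ∈ homogeneousSubmodule (Fin (n+1)) ℂ m)
    (hadd : ∀ u v, α (u + v) = α u + α v)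
    (hsmul : ∀ (r : ℝ) (v : Fin n → ℂ), α ((r : ℂ) • v) = (r : ℂ) • α v)
    (hsym : ∀ u v, rho n (xi n u) (α v) = rho n (xi n v) (α u))
    (htr : ∑ j : Fin n,
        (rho n (xi n (Pi.single j 1)) (α (Pi.single j 1))
          + rho n (xi n (Pi.single j Complex.I)) (α (Pi.single j Complex.I))) = 0) :
    (∀ v, α (Complex.I • v) = (-Complex.I) • α v) ∧ (∀ v, α v ∈ Wcomp n m m) := by
  classical
  set LAST := Fin.last n with hLAST
  have hI : (C Complex.I : MvPolynomial (Fin (n+1)) ℂ) * C Complex.I = -1 := by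
    rw [← C_mul, Complex.I_mul_I, map_neg, map_one]
  have htwo : (2 : MvPolynomial (Fin (n+1)) ℂ) ≠ 0 := by
    rw [(map_ofNat C 2).symm, Ne, C_eq_zero]
    norm_num
  have hsym' : ∀ u v, Lf n u * pderiv LAST (α v) + X LAST * Dop n u (α v)
      = Lf n v * pderiv LAST (α u) + X LAST * Dop n v (α u) := by
    intro u v
    have h := hsym u v
    rwa [rho_xi_apply, rho_xi_apply] at h
  -- R6
  have hR6 : ∀ u v,
      Lf n u * (pderiv LAST (α v) - C Complex.I * pderiv LAST (α (Complex.I • v)))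
      = Lf n v * (pderiv LAST (α u) - C Complex.I * pderiv LAST (α (Complex.I • u))) := by
    intro u v
    have h1 := hsym' u v
    have h2 := hsym' u (Complex.I • v)
    have h3 := hsym' (Complex.I • u) v
    have h4 := hsym' (Complex.I • u) (Complex.I • v)
    rw [Lf_smul_I n v, Dop_smul_I n v (α u)] at h2
    rw [Lf_smul_I n u, Dop_smul_I n u (α v)] at h3
    rw [Lf_smul_I n u, Lf_smul_I n v, Dop_smul_I n u (α (Complex.I • v)),
      Dop_smul_I n v (α (Complex.I • u))] at h4
    apply mul_left_cancel₀ htwo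
    linear_combination h1 - C Complex.I * h2 - C Complex.I * h3 - h4
      + (Lf n u * pderiv LAST (α v) - X LAST * Dop n u (α v)
        - Lf n v * pderiv LAST (α u) + X LAST * Dop n v (α u)) * hI
  -- R8
  have hR8 : ∀ u v,
      X LAST * (Dop n u (α v) - C Complex.I * Dop n u (α (Complex.I • v)))
      = Lf n v * (pderiv LAST (α u) + C Complex.I * pderiv LAST (α (Complex.I • u))) := by
    intro u v
    have h1 := hsym' u v
    have h2 := hsym' u (Complex.I • v)
    have h3 := hsym' (Complex.I • u) v
    have h4 := hsym' (Complex.I • u) (Complex.I • v)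
    rw [Lf_smul_I n v, Dop_smul_I n v (α u)] at h2
    rw [Lf_smul_I n u, Dop_smul_I n u (α v)] at h3
    rw [Lf_smul_I n u, Lf_smul_I n v, Dop_smul_I n u (α (Complex.I • v)),
      Dop_smul_I n v (α (Complex.I • u))] at h4
    apply mul_left_cancel₀ htwo
    linear_combination h1 - C Complex.I * h2 + C Complex.I * h3 + h4
      + (- Lf n u * pderiv LAST (α v) + X LAST * Dop n u (α v)
        - Lf n v * pderiv LAST (α u) + X LAST * Dop n v (α u)) * hI
  have hsingleI : ∀ j : Fin n, (Pi.single j Complex.I : Fin n → ℂ)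
      = Complex.I • (Pi.single j 1 : Fin n → ℂ) := by
    intro j
    ext k
    by_cases hk : k = j
    · subst hk; simp
    · simp [Pi.single_eq_of_ne hk]
  -- expanded trace
  have htr' : ∑ j : Fin n,
      (X (Fin.castSucc j) * pderiv LAST (α (Pi.single j 1))
        + X LAST * pderiv (Fin.castSucc j) (α (Pi.single j 1))
        + (C Complex.I * X (Fin.castSucc j) * pderiv LAST (α (Complex.I • (Pi.single j 1 : Fin n → ℂ)))
          - C Complex.I * (X LAST * pderiv (Fin.castSucc j) (α (Complex.I • (Pi.single j 1 : Fin n → ℂ)))))) = 0 := by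
    rw [← htr]
    apply Finset.sum_congr rfl
    intro j _
    rw [hsingleI j, rho_xi_apply, rho_xi_apply, Lf_smul_I,
      Dop_smul_I n (Pi.single j 1) (α (Complex.I • (Pi.single j 1 : Fin n → ℂ))),
      Lf_single, Dop_single n j (α (Pi.single j 1)),
      Dop_single n j (α (Complex.I • (Pi.single j 1 : Fin n → ℂ)))]
    ring
  -- hA : per-index identity from R8
  have hA : ∀ j : Fin n,
      X LAST * (pderiv (Fin.castSucc j) (α (Pi.single j 1))
        - C Complex.I * pderiv (Fin.castSucc j) (α (Complex.I • (Pi.single j 1 : Fin n → ℂ))))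
      = X (Fin.castSucc j) * (pderiv LAST (α (Pi.single j 1))
          + C Complex.I * pderiv LAST (α (Complex.I • (Pi.single j 1 : Fin n → ℂ)))) := by
    intro j
    have h := hR8 (Pi.single j 1) (Pi.single j 1)
    rwa [Dop_single n j (α (Pi.single j 1)),
      Dop_single n j (α (Complex.I • (Pi.single j 1 : Fin n → ℂ))), Lf_single] at h
  -- the trace relation T
  have hT : ∑ j : Fin n, X (Fin.castSucc j) * (pderiv LAST (α (Pi.single j 1))
      + C Complex.I * pderiv LAST (α (Complex.I • (Pi.single j 1 : Fin n → ℂ)))) = 0 := by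
    have h2 : (2 : MvPolynomial (Fin (n+1)) ℂ)
        * ∑ j : Fin n, X (Fin.castSucc j) * (pderiv LAST (α (Pi.single j 1))
            + C Complex.I * pderiv LAST (α (Complex.I • (Pi.single j 1 : Fin n → ℂ)))) = 0 := by
      rw [Finset.mul_sum, ← htr']
      apply Finset.sum_congr rfl
      intro j _
      linear_combination -(hA j)
    rw [mul_eq_zero] at h2
    exact h2.resolve_left htwo
  -- per-direction consequence of R8
  have hj : ∀ (v : Fin n → ℂ) (j : Fin n),
      X LAST * (pderiv (Fin.castSucc j) (α v)
        - C Complex.I * pderiv (Fin.castSucc j) (α (Complex.I • v)))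
      = Lf n v * (pderiv LAST (α (Pi.single j 1))
          + C Complex.I * pderiv LAST (α (Complex.I • (Pi.single j 1 : Fin n → ℂ)))) := by
    intro v j
    have h := hR8 (Pi.single j 1) v
    rwa [Dop_single n j (α v), Dop_single n j (α (Complex.I • v))] at h
  -- Euler / trace combination
  have hMB : ∀ v, C (m:ℂ) * (α v - C Complex.I * α (Complex.I • v))
      = X LAST * (pderiv LAST (α v) - C Complex.I * pderiv LAST (α (Complex.I • v))) := by
    intro v
    apply mul_left_cancel₀ (X_ne_zero LAST)
    have h1 := euler_id (α v) ((mem_homogeneousSubmodule _ _).mp (hW v))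
    have h2 := euler_id (α (Complex.I • v))
      ((mem_homogeneousSubmodule _ _).mp (hW (Complex.I • v)))
    rw [Fin.sum_univ_castSucc] at h1 h2
    have hS : X LAST * (∑ j : Fin n, X (Fin.castSucc j) * pderiv (Fin.castSucc j) (α v))
        - C Complex.I * (X LAST
          * ∑ j : Fin n, X (Fin.castSucc j) * pderiv (Fin.castSucc j) (α (Complex.I • v)))
        = Lf n v * ∑ j : Fin n, X (Fin.castSucc j) * (pderiv LAST (α (Pi.single j 1))
            + C Complex.I * pderiv LAST (α (Complex.I • (Pi.single j 1 : Fin n → ℂ)))) := by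
      rw [Finset.mul_sum, Finset.mul_sum, Finset.mul_sum, Finset.mul_sum,
        ← Finset.sum_sub_distrib]
      apply Finset.sum_congr rfl
      intro j _
      linear_combination X (Fin.castSucc j) * hj v j
    rw [hT, mul_zero] at hS
    linear_combination X LAST * h1 - C Complex.I * (X LAST * h2) + hS
  have hpd : ∀ (i : Fin (n+1)) (v : Fin n → ℂ),
      pderiv i (α v - C Complex.I * α (Complex.I • v))
      = pderiv i (α v) - C Complex.I * pderiv i (α (Complex.I • v)) := by
    intro i v
    rw [map_sub, pderiv_C_mul]
  -- coefficient classification of B v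
  have hBcoeff : ∀ (v : Fin n → ℂ) (d : Fin (n+1) →₀ ℕ), d ≠ Finsupp.single LAST m →
      coeff d (α v - C Complex.I * α (Complex.I • v)) = 0 := by
    intro v d hd
    by_cases hc : coeff d (α v - C Complex.I * α (Complex.I • v)) = 0
    · exact hc
    exfalso
    have hdeg : d.degree = m := by
      by_contra hne
      apply hc
      rw [coeff_sub, coeff_C_mul,
        ((mem_homogeneousSubmodule _ _).mp (hW v)).coeff_eq_zero hne,
        ((mem_homogeneousSubmodule _ _).mp (hW (Complex.I • v))).coeff_eq_zero hne]
      simp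
    have h1 := congrArg (coeff d) (hMB v)
    rw [coeff_C_mul, ← hpd LAST v, coeff_X_mul_pderiv] at h1
    have hdl : d LAST = m := by
      have := mul_right_cancel₀ hc h1
      exact_mod_cast this.symm
    apply hd
    have hsum : ∑ i, d i = m := by
      rw [← hdeg, Finsupp.degree]
      exact (Finset.sum_subset (Finset.subset_univ _)
        (fun x _ hx => Finsupp.notMem_support_iff.mp hx)).symm
    have hz : ∀ i : Fin (n+1), i ≠ LAST → d i = 0 := by
      intro i hi
      have hrest := Finset.add_sum_erase Finset.univ d (Finset.mem_univ LAST)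
      have h0 : ∑ x ∈ Finset.univ.erase LAST, d x = 0 := by omega
      exact Finset.sum_eq_zero_iff.mp h0 i (Finset.mem_erase.mpr ⟨hi, Finset.mem_univ i⟩)
    ext i
    by_cases hi : i = LAST
    · subst hi; simp [hdl]
    · rw [hz i hi, Finsupp.single_apply, if_neg (fun h => hi h.symm)]
  have hBform : ∀ v : Fin n → ℂ, α v - C Complex.I * α (Complex.I • v)
      = monomial (Finsupp.single LAST m)
          (coeff (Finsupp.single LAST m) (α v - C Complex.I * α (Complex.I • v))) := by
    intro v
    apply MvPolynomial.ext
    intro d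
    rw [coeff_monomial]
    by_cases hd : d = Finsupp.single LAST m
    · subst hd; rw [if_pos rfl]
    · rw [if_neg (fun h => hd h.symm), hBcoeff v d hd]
  -- kill the coefficient using R6 with two independent directions
  have hmC : (m:ℂ) ≠ 0 := Nat.cast_ne_zero.mpr (by omega)
  have hc1 : coeff (Finsupp.single LAST m)
      (α (Pi.single (⟨1, hn⟩ : Fin n) 1)
        - C Complex.I * α (Complex.I • (Pi.single (⟨1, hn⟩ : Fin n) 1 : Fin n → ℂ))) = 0 := by
    have h6 := hR6 (Pi.single (⟨0, by omega⟩ : Fin n) 1) (Pi.single (⟨1, hn⟩ : Fin n) 1)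
    rw [Lf_single, Lf_single, ← hpd LAST (Pi.single (⟨1, hn⟩ : Fin n) 1),
      ← hpd LAST (Pi.single (⟨0, by omega⟩ : Fin n) 1),
      hBform (Pi.single (⟨1, hn⟩ : Fin n) 1), hBform (Pi.single (⟨0, by omega⟩ : Fin n) 1),
      pderiv_monomial, pderiv_monomial] at h6
    have h6' := congrArg (coeff (Finsupp.single (Fin.castSucc (⟨0, by omega⟩ : Fin n)) 1
      + (Finsupp.single LAST m - Finsupp.single LAST 1))) h6
    rw [coeff_X_mul, coeff_monomial, if_pos rfl, X, monomial_mul, coeff_monomial,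
      if_neg (fun hcontra => ?_)] at h6'
    · have := (mul_eq_zero.mp h6').resolve_right
        (by rw [Finsupp.single_eq_same]; exact_mod_cast hmC)
      exact this
    · have h := add_right_cancel hcontra
      have h2 := (Finsupp.single_left_inj (one_ne_zero)).mp h
      have h3 := Fin.castSucc_injective n h2
      simp [Fin.ext_iff] at h3
  have hB1 : α (Pi.single (⟨1, hn⟩ : Fin n) 1)
      - C Complex.I * α (Complex.I • (Pi.single (⟨1, hn⟩ : Fin n) 1 : Fin n → ℂ)) = 0 := by
    rw [hBform, hc1, monomial_zero]
  have hDB1 : pderiv LAST (α (Pi.single (⟨1, hn⟩ : Fin n) 1))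
      - C Complex.I * pderiv LAST (α (Complex.I • (Pi.single (⟨1, hn⟩ : Fin n) 1 : Fin n → ℂ))) = 0 := by
    have h := congrArg (pderiv LAST) hB1
    rwa [hpd, map_zero] at h
  have hdB : ∀ v, pderiv LAST (α v)
      - C Complex.I * pderiv LAST (α (Complex.I • v)) = 0 := by
    intro v
    have h := hR6 (Pi.single (⟨1, hn⟩ : Fin n) 1) v
    rw [Lf_single, hDB1, mul_zero] at h
    exact (mul_eq_zero.mp h).resolve_left (X_ne_zero _)
  have hB0 : ∀ v, α v - C Complex.I * α (Complex.I • v) = 0 := by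
    intro v
    have h := hMB v
    rw [hdB v, mul_zero, mul_eq_zero] at h
    refine h.resolve_left ?_
    simp only [ne_eq, C_eq_zero]
    exact hmC
  have goal1 : ∀ v, α (Complex.I • v) = (-Complex.I) • α v := by
    intro v
    have h := sub_eq_zero.mp (hB0 v)
    rw [smul_eq_C_mul, h, ← mul_assoc, ← C_mul, neg_mul, Complex.I_mul_I, neg_neg, C_1, one_mul]
  have hplus : ∀ v, pderiv LAST (α v)
      + C Complex.I * pderiv LAST (α (Complex.I • v)) = 0 := by
    intro v
    have h := hR8 v (Pi.single (⟨1, hn⟩ : Fin n) 1)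
    have hD0 : Dop n v (α (Pi.single (⟨1, hn⟩ : Fin n) 1))
        - C Complex.I * Dop n v (α (Complex.I • (Pi.single (⟨1, hn⟩ : Fin n) 1 : Fin n → ℂ))) = 0 := by
      rw [← Dop_sub_C_mul, hB1]
      simp [Dop]
    rw [hD0, mul_zero, Lf_single] at h
    exact (mul_eq_zero.mp h.symm).resolve_left (X_ne_zero _)
  have hy : ∀ v, pderiv LAST (α v) = 0 := by
    intro v
    have h2 : (2 : MvPolynomial (Fin (n+1)) ℂ) * pderiv LAST (α v) = 0 := by
      linear_combination hdB v + hplus v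
    exact (mul_eq_zero.mp h2).resolve_left htwo
  refine ⟨goal1, ?_⟩
  intro v
  have hhom := (mem_homogeneousSubmodule _ _).mp (hW v)
  rw [← support_sum_monomial_coeff (α v)]
  apply Submodule.sum_mem
  intro d hd
  have hcd : coeff d (α v) ≠ 0 := mem_support_iff.mp hd
  have hdl : d LAST = 0 := by
    have h := coeff_X_mul_pderiv LAST d (α v)
    rw [hy v, mul_zero, coeff_zero] at h
    have h2 := (mul_eq_zero.mp h.symm).resolve_right hcd
    exact_mod_cast h2
  have hdeg : d.degree = m := by
    by_contra hne
    exact hcd (hhom.coeff_eq_zero hne)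
  have hsum : ∑ i, d i = m := by
    rw [← hdeg, Finsupp.degree]
    exact (Finset.sum_subset (Finset.subset_univ _)
      (fun x _ hx => Finsupp.notMem_support_iff.mp hx)).symm
  have hmem : (monomial d 1 : MvPolynomial (Fin (n+1)) ℂ) ∈ Wcomp n m m :=
    Submodule.subset_span ⟨d, hsum, by rw [Nat.sub_self]; exact hdl, rfl⟩
  have hmon : (monomial d (coeff d (α v)) : MvPolynomial (Fin (n+1)) ℂ)
      = coeff d (α v) • monomial d 1 := by
    rw [smul_eq_C_mul, C_mul_monomial, mul_one]
  rw [hmon]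
  exact Submodule.smul_mem _ _ hmem

end
end

section
/- Let n > 1 and m ≥ 1. Suppose α : 𝔭 → W' = S^m(V)' is an ℝ-linear map satisfying (i) ρ_m'(ξ_u)α(ξ_v) = ρ_m'(ξ_v)α(ξ_u) for all u, v ∈ ℂⁿ, and (ii) Σ_{j=1}^n ( ρ_m'(ξ_{e_j})α(ξ_{e_j}) + ρ_m'(ξ_{i e_j})α(ξ_{i e_j}) ) = 0. Then α is ℂ-linear, i.e. α(ξ_{iv}) = i·α(ξ_v) for all v ∈ ℂⁿ, α takes values in S^m(V_1') (the symmetric m-linear forms vanishing whenever some argument equals e_{n+1}), and the (m+1)-linear form (u, v_1, …, v_m) ↦ α(ξ_u)(v_1, …, v_m) on V_1 is symmetric in all m+1 variables. -/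
open MvPolynomial

noncomputable section

/-- The dual representation `ρ'(X)φ = -φ ∘ ρ(X)` on `m`-linear forms on `ℂ^{n+1}`. -/
def rhoDual (n m : ℕ) (M : Matrix (Fin (n+1)) (Fin (n+1)) ℂ)
    (φ : MultilinearMap ℂ (fun _ : Fin m => (Fin (n+1) → ℂ)) ℂ) :
    MultilinearMap ℂ (fun _ : Fin m => (Fin (n+1) → ℂ)) ℂ :=
  - ∑ i : Fin m, φ.compLinearMap
      (Function.update (fun _ => (LinearMap.id : (Fin (n+1) → ℂ) →ₗ[ℂ] (Fin (n+1) → ℂ)))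
        i (Matrix.toLin' M))

section ESLemmas
namespace ES

def eV (n : ℕ) : Fin (n+1) → ℂ := Pi.single (Fin.last n) 1

def hermB (n : ℕ) (u w : Fin n → ℂ) : ℂ := ∑ j, (starRingEnd ℂ) (u j) * w j

def tup (n : ℕ) {m : ℕ} (S : Finset (Fin m)) (w : Fin m → Fin n → ℂ) :
    Fin m → Fin (n+1) → ℂ := fun i => if i ∈ S then eV n else Fin.snoc (w i) 0

variable {n m : ℕ}

lemma hermB_smulI (u w : Fin n → ℂ) :
    hermB n (Complex.I • u) w = -Complex.I * hermB n u w := by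
  unfold hermB
  rw [Finset.mul_sum]
  refine Finset.sum_congr rfl fun j _ => ?_
  simp only [Pi.smul_apply, smul_eq_mul, map_mul, Complex.conj_I]
  ring

lemma hermB_single (j : Fin n) (w : Fin n → ℂ) : hermB n (Pi.single j 1) w = w j := by
  unfold hermB
  simp [Pi.single_apply, apply_ite (starRingEnd ℂ), ite_mul]

lemma smul_snoc (c : ℂ) (w : Fin n → ℂ) :
    (Fin.snoc (c • w) (0:ℂ) : Fin (n+1) → ℂ) = c • (Fin.snoc w 0 : Fin (n+1) → ℂ) := by
  funext i
  refine Fin.lastCases ?_ ?_ i <;> simp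

lemma tup_upd_not_mem {S : Finset (Fin m)} {i : Fin m} (hi : i ∉ S)
    (w : Fin m → Fin n → ℂ) (z : Fin n → ℂ) :
    tup n S (Function.update w i z) = Function.update (tup n S w) i (Fin.snoc z 0) := by
  funext k
  by_cases hk : k = i
  · subst hk; simp [tup, hi]
  · simp [tup, Function.update_of_ne hk]

lemma tup_upd_mem {S : Finset (Fin m)} {i : Fin m} (hi : i ∈ S)
    (w : Fin m → Fin n → ℂ) (z : Fin n → ℂ) :
    tup n S (Function.update w i z) = tup n S w := by
  funext k
  by_cases hk : k = i
  · subst hk; simp [tup, hi]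
  · simp [tup, Function.update_of_ne hk]

lemma tup_insert (S : Finset (Fin m)) (i : Fin m) (w : Fin m → Fin n → ℂ) :
    Function.update (tup n S w) i (eV n) = tup n (insert i S) w := by
  funext k
  by_cases hk : k = i
  · subst hk; simp [tup]
  · simp [tup, Function.update_of_ne hk, Finset.mem_insert, hk]

lemma tup_erase {S : Finset (Fin m)} {i : Fin m} (hi : i ∈ S) (w : Fin m → Fin n → ℂ)
    (u : Fin n → ℂ) :
    Function.update (tup n S w) i (Fin.snoc u 0) = tup n (S.erase i) (Function.update w i u) := by
  funext k
  by_cases hk : k = i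
  · subst hk; simp [tup, Finset.notMem_erase]
  · simp [tup, Function.update_of_ne hk, Finset.mem_erase, hk]

lemma tup_empty (w : Fin m → Fin n → ℂ) :
    tup n (∅ : Finset (Fin m)) w = fun i => Fin.snoc (w i) 0 := by
  funext i; simp [tup]

lemma xi_cs_last (u : Fin n → ℂ) (k : Fin n) :
    xi n u (Fin.castSucc k) (Fin.last n) = u k := by
  rw [xi, Matrix.add_apply, xiP, xiM, Matrix.of_apply, Matrix.of_apply,
    dif_pos ⟨by simpa using k.isLt, rfl⟩, dif_neg (by rintro ⟨h, -⟩; exact (Fin.castSucc_lt_last k).ne h)]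
  simp

lemma xi_cs_cs (u : Fin n → ℂ) (k j : Fin n) :
    xi n u (Fin.castSucc k) (Fin.castSucc j) = 0 := by
  rw [xi, Matrix.add_apply, xiP, xiM, Matrix.of_apply, Matrix.of_apply,
    dif_neg (by rintro ⟨-, h⟩; exact (Fin.castSucc_lt_last j).ne h),
    dif_neg (by rintro ⟨h, -⟩; exact (Fin.castSucc_lt_last k).ne h)]
  simp

lemma xi_last_last (u : Fin n → ℂ) : xi n u (Fin.last n) (Fin.last n) = 0 := by
  rw [xi, Matrix.add_apply, xiP, xiM, Matrix.of_apply, Matrix.of_apply,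
    dif_neg (by rintro ⟨h, -⟩; simp at h), dif_neg (by rintro ⟨-, h⟩; simp at h)]
  simp

lemma xi_last_cs (u : Fin n → ℂ) (j : Fin n) :
    xi n u (Fin.last n) (Fin.castSucc j) = (starRingEnd ℂ) (u j) := by
  rw [xi, Matrix.add_apply, xiP, xiM, Matrix.of_apply, Matrix.of_apply,
    dif_neg (by rintro ⟨h, -⟩; simp at h),
    dif_pos ⟨rfl, by simpa using j.isLt⟩]
  simp

lemma xi_mulVec_eV (u : Fin n → ℂ) : (xi n u).mulVec (eV n) = Fin.snoc u 0 := by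
  funext i
  have h1 : (xi n u).mulVec (eV n) i = ∑ j, xi n u i j * eV n j := rfl
  have h2 : ∀ j, xi n u i j * eV n j = if j = Fin.last n then xi n u i (Fin.last n) else 0 := by
    intro j
    by_cases hj : j = Fin.last n
    · subst hj; simp [eV]
    · simp [eV, Pi.single_apply, hj]
  rw [h1, Finset.sum_congr rfl fun j _ => h2 j, Finset.sum_ite_eq' Finset.univ (Fin.last n)]
  simp only [Finset.mem_univ, if_true]
  refine Fin.lastCases ?_ ?_ i
  · rw [xi_last_last]; simp
  · intro k
    rw [xi_cs_last]; simp

lemma xi_mulVec_snoc (u w : Fin n → ℂ) :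
    (xi n u).mulVec (Fin.snoc w 0) = hermB n u w • eV n := by
  funext i
  have h1 : (xi n u).mulVec (Fin.snoc w 0) i
      = ∑ j, xi n u i j * (Fin.snoc w 0 : Fin (n+1) → ℂ) j := rfl
  rw [h1, Fin.sum_univ_castSucc]
  refine Fin.lastCases ?_ ?_ i
  · simp only [Fin.snoc_castSucc, Fin.snoc_last, mul_zero, add_zero]
    rw [Finset.sum_congr rfl fun j _ => by rw [xi_last_cs]]
    simp [hermB, eV]
  · intro k
    simp only [Fin.snoc_castSucc, Fin.snoc_last, mul_zero, add_zero]
    rw [Finset.sum_congr rfl fun j _ => by rw [xi_cs_cs]]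
    simp [eV, Pi.single_apply, (Fin.castSucc_lt_last k).ne]

lemma rhoDual_apply (M : Matrix (Fin (n+1)) (Fin (n+1)) ℂ)
    (φ : MultilinearMap ℂ (fun _ : Fin m => (Fin (n+1) → ℂ)) ℂ)
    (x : Fin m → Fin (n+1) → ℂ) :
    rhoDual n m M φ x = -∑ i, φ (Function.update x i (M.mulVec (x i))) := by
  unfold rhoDual
  rw [MultilinearMap.neg_apply, MultilinearMap.sum_apply]
  congr 1
  refine Finset.sum_congr rfl fun i _ => ?_
  rw [MultilinearMap.compLinearMap_apply]
  congr 1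
  funext j
  by_cases hj : j = i
  · subst hj; simp [Matrix.toLin'_apply]
  · simp [Function.update_of_ne hj]

variable (α : (Fin n → ℂ) → MultilinearMap ℂ (fun _ : Fin m => (Fin (n+1) → ℂ)) ℂ)

def Af (v : Fin n → ℂ) (S : Finset (Fin m)) (w : Fin m → Fin n → ℂ) : ℂ :=
  α v (tup n S w)

def Pf (v : Fin n → ℂ) (S : Finset (Fin m)) (w : Fin m → Fin n → ℂ) : ℂ :=
  (Af α v S w - Complex.I * Af α (Complex.I • v) S w) / 2

def Qf (v : Fin n → ℂ) (S : Finset (Fin m)) (w : Fin m → Fin n → ℂ) : ℂ :=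
  (Af α v S w + Complex.I * Af α (Complex.I • v) S w) / 2

lemma Pf_add_Qf (v : Fin n → ℂ) (S : Finset (Fin m)) (w : Fin m → Fin n → ℂ) :
    Af α v S w = Pf α v S w + Qf α v S w := by
  unfold Pf Qf; ring

lemma Af_slot_smul (v : Fin n → ℂ) {S : Finset (Fin m)} {i : Fin m} (hi : i ∉ S)
    (w : Fin m → Fin n → ℂ) (c : ℂ) (u : Fin n → ℂ) :
    Af α v S (Function.update w i (c • u)) = c * Af α v S (Function.update w i u) := by
  unfold Af
  rw [tup_upd_not_mem hi, tup_upd_not_mem hi, smul_snoc,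
    (α v).map_update_smul (tup n S w) i c (Fin.snoc u 0), smul_eq_mul]

section Lin
variable {α : (Fin n → ℂ) → MultilinearMap ℂ (fun _ : Fin m => (Fin (n+1) → ℂ)) ℂ}
variable (hadd : ∀ u v, α (u + v) = α u + α v)
variable (hsmul : ∀ (r : ℝ) (v : Fin n → ℂ), α ((r : ℂ) • v) = (r : ℂ) • α v)
include hadd hsmul

lemma Af_add (v v' : Fin n → ℂ) (S : Finset (Fin m)) (w : Fin m → Fin n → ℂ) :
    Af α (v + v') S w = Af α v S w + Af α v' S w := by
  unfold Af; rw [hadd]; rfl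

lemma Af_real (r : ℝ) (v : Fin n → ℂ) (S : Finset (Fin m)) (w : Fin m → Fin n → ℂ) :
    Af α ((r : ℂ) • v) S w = (r : ℂ) * Af α v S w := by
  unfold Af; rw [hsmul]; rfl

lemma Af_II (v : Fin n → ℂ) (S : Finset (Fin m)) (w : Fin m → Fin n → ℂ) :
    Af α (Complex.I • Complex.I • v) S w = - Af α v S w := by
  have h : Complex.I • Complex.I • v = (((-1 : ℝ) : ℂ)) • v := by
    rw [smul_smul, Complex.I_mul_I]; norm_num
  rw [h, Af_real hadd hsmul]; push_cast; ring

lemma Pf_add (v v' : Fin n → ℂ) (S : Finset (Fin m)) (w : Fin m → Fin n → ℂ) :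
    Pf α (v + v') S w = Pf α v S w + Pf α v' S w := by
  unfold Pf
  rw [smul_add, Af_add hadd hsmul, Af_add hadd hsmul]
  ring

lemma Pf_real (r : ℝ) (v : Fin n → ℂ) (S : Finset (Fin m)) (w : Fin m → Fin n → ℂ) :
    Pf α ((r : ℂ) • v) S w = (r : ℂ) * Pf α v S w := by
  unfold Pf
  rw [smul_comm, Af_real hadd hsmul, Af_real hadd hsmul]
  ring

lemma Pf_I (v : Fin n → ℂ) (S : Finset (Fin m)) (w : Fin m → Fin n → ℂ) :
    Pf α (Complex.I • v) S w = Complex.I * Pf α v S w := by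
  unfold Pf
  rw [Af_II hadd hsmul]
  linear_combination (Af α (Complex.I • v) S w / 2) * Complex.I_sq

lemma Qf_I (v : Fin n → ℂ) (S : Finset (Fin m)) (w : Fin m → Fin n → ℂ) :
    Qf α (Complex.I • v) S w = -(Complex.I * Qf α v S w) := by
  unfold Qf
  rw [Af_II hadd hsmul]
  linear_combination (Af α (Complex.I • v) S w / 2) * Complex.I_sq

lemma Pf_csmul (c : ℂ) (v : Fin n → ℂ) (S : Finset (Fin m)) (w : Fin m → Fin n → ℂ) :
    Pf α (c • v) S w = c * Pf α v S w := by
  have hdec : c • v = ((c.re : ℂ)) • v + ((c.im : ℂ)) • (Complex.I • v) := by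
    rw [smul_smul, ← add_smul, Complex.re_add_im]
  rw [hdec, Pf_add hadd hsmul, Pf_real hadd hsmul, Pf_real hadd hsmul, Pf_I hadd hsmul]
  linear_combination (Pf α v S w) * (Complex.re_add_im c)

lemma Pf_combo (z : Fin n → ℂ) (S : Finset (Fin m)) (w : Fin m → Fin n → ℂ) :
    ∑ j, z j * Pf α (Pi.single j 1) S w = Pf α z S w := by
  classical
  have hsingle : ∀ j : Fin n, (Pi.single j (z j) : Fin n → ℂ) = z j • (Pi.single j 1 : Fin n → ℂ) := by
    intro j
    rw [← Pi.single_smul, smul_eq_mul, mul_one]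
  have hstep : ∀ j : Fin n, Pf α (Pi.single j (z j)) S w = z j * Pf α (Pi.single j 1) S w := by
    intro j
    rw [hsingle j, Pf_csmul hadd hsmul]
  have hz : (∑ j, (Pi.single j (z j) : Fin n → ℂ)) = z := Finset.univ_sum_single z
  have hsum : ∀ (T : Finset (Fin n)), Pf α (∑ j ∈ T, (Pi.single j (z j) : Fin n → ℂ)) S w
      = ∑ j ∈ T, Pf α (Pi.single j (z j)) S w := by
    intro T
    induction T using Finset.induction_on with
    | empty =>
      have h0 : (0 : Fin n → ℂ) = (((0:ℝ):ℂ)) • (0 : Fin n → ℂ) := by norm_num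
      rw [Finset.sum_empty, Finset.sum_empty, h0, Pf_real hadd hsmul]
      norm_num
    | insert _ _ hx ih =>
      rw [Finset.sum_insert hx, Finset.sum_insert hx, Pf_add hadd hsmul, ih]
  calc ∑ j, z j * Pf α (Pi.single j 1) S w
      = ∑ j, Pf α (Pi.single j (z j)) S w := by
        exact (Finset.sum_congr rfl fun j _ => (hstep j).symm)
    _ = Pf α (∑ j, (Pi.single j (z j) : Fin n → ℂ)) S w := (hsum Finset.univ).symm
    _ = Pf α z S w := by rw [hz]

end Lin

section Rel
variable {α : (Fin n → ℂ) → MultilinearMap ℂ (fun _ : Fin m => (Fin (n+1) → ℂ)) ℂ}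

lemma rho_tup (p q : Fin n → ℂ) (S : Finset (Fin m)) (w : Fin m → Fin n → ℂ) :
    ∑ i, α q (Function.update (tup n S w) i ((xi n p).mulVec (tup n S w i)))
      = (∑ i ∈ S, Af α q (S.erase i) (Function.update w i p))
        + ∑ i ∈ Sᶜ, hermB n p (w i) * Af α q (insert i S) w := by
  classical
  have key : ∀ i : Fin m, α q (Function.update (tup n S w) i ((xi n p).mulVec (tup n S w i)))
      = if i ∈ S then Af α q (S.erase i) (Function.update w i p)
        else hermB n p (w i) * Af α q (insert i S) w := by
    intro i
    by_cases hi : i ∈ S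
    · rw [if_pos hi]
      have ht : tup n S w i = eV n := if_pos hi
      rw [ht, xi_mulVec_eV, tup_erase hi]
      rfl
    · rw [if_neg hi]
      have ht : tup n S w i = Fin.snoc (w i) 0 := if_neg hi
      rw [ht, xi_mulVec_snoc,
        (α q).map_update_smul (tup n S w) i (hermB n p (w i)) (eV n), tup_insert, smul_eq_mul]
      rfl
  rw [Finset.sum_congr rfl fun i _ => key i,
    ← Finset.sum_filter_add_sum_filter_not Finset.univ (· ∈ S)]
  congr 1
  · have hf : Finset.univ.filter (fun i => i ∈ S) = S := by ext i; simp
    rw [hf]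
    exact Finset.sum_congr rfl fun i hi => if_pos hi
  · have hf : Finset.univ.filter (fun i => ¬ i ∈ S) = Sᶜ := by ext i; simp
    rw [hf]
    exact Finset.sum_congr rfl fun i hi => if_neg (by simpa using hi)

variable (hsym : ∀ u v, rhoDual n m (xi n u) (α v) = rhoDual n m (xi n v) (α u))

include hsym in
lemma symRel (u v : Fin n → ℂ) (S : Finset (Fin m)) (w : Fin m → Fin n → ℂ) :
    (∑ i ∈ S, Af α v (S.erase i) (Function.update w i u))
      + ∑ i ∈ Sᶜ, hermB n u (w i) * Af α v (insert i S) w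
    = (∑ i ∈ S, Af α u (S.erase i) (Function.update w i v))
      + ∑ i ∈ Sᶜ, hermB n v (w i) * Af α u (insert i S) w := by
  have h := DFunLike.congr_fun (hsym u v) (tup n S w)
  rw [rhoDual_apply, rhoDual_apply, neg_inj] at h
  rw [rho_tup, rho_tup] at h
  exact h

lemma sumS_smul (q p : Fin n → ℂ) (S : Finset (Fin m)) (w : Fin m → Fin n → ℂ) :
    ∑ i ∈ S, Af α q (S.erase i) (Function.update w i (Complex.I • p))
      = Complex.I * ∑ i ∈ S, Af α q (S.erase i) (Function.update w i p) := by
  rw [Finset.mul_sum]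
  exact Finset.sum_congr rfl fun i _ =>
    Af_slot_smul α q (Finset.notMem_erase i S) w Complex.I p

lemma sumC_smul (q p : Fin n → ℂ) (S : Finset (Fin m)) (w : Fin m → Fin n → ℂ) :
    ∑ i ∈ Sᶜ, hermB n (Complex.I • p) (w i) * Af α q (insert i S) w
      = (-Complex.I) * ∑ i ∈ Sᶜ, hermB n p (w i) * Af α q (insert i S) w := by
  rw [Finset.mul_sum]
  refine Finset.sum_congr rfl fun i _ => ?_
  rw [hermB_smulI]
  ring

include hsym in
lemma atoms (u v : Fin n → ℂ) (S : Finset (Fin m)) (w : Fin m → Fin n → ℂ) :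
    ((∑ i ∈ S, Af α v (S.erase i) (Function.update w i u))
        - Complex.I * ∑ i ∈ S, Af α (Complex.I • v) (S.erase i) (Function.update w i u)
      = (∑ i ∈ S, Af α u (S.erase i) (Function.update w i v))
        - Complex.I * ∑ i ∈ S, Af α (Complex.I • u) (S.erase i) (Function.update w i v))
    ∧ ((∑ i ∈ Sᶜ, hermB n u (w i) * Af α v (insert i S) w)
        - Complex.I * ∑ i ∈ Sᶜ, hermB n u (w i) * Af α (Complex.I • v) (insert i S) w
      = (∑ i ∈ S, Af α u (S.erase i) (Function.update w i v))
        + Complex.I * ∑ i ∈ S, Af α (Complex.I • u) (S.erase i) (Function.update w i v))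
    ∧ ((∑ i ∈ Sᶜ, hermB n u (w i) * Af α v (insert i S) w)
        + Complex.I * ∑ i ∈ Sᶜ, hermB n u (w i) * Af α (Complex.I • v) (insert i S) w
      = (∑ i ∈ Sᶜ, hermB n v (w i) * Af α u (insert i S) w)
        + Complex.I * ∑ i ∈ Sᶜ, hermB n v (w i) * Af α (Complex.I • u) (insert i S) w) := by
  have e1 := symRel hsym u v S w
  have e2 := symRel hsym u (Complex.I • v) S w
  have e3 := symRel hsym (Complex.I • u) v S w
  have e4 := symRel hsym (Complex.I • u) (Complex.I • v) S w
  rw [sumS_smul, sumC_smul] at e2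
  rw [sumS_smul, sumC_smul] at e3
  rw [sumS_smul, sumC_smul, sumS_smul, sumC_smul] at e4
  set A1 := ∑ i ∈ S, Af α v (S.erase i) (Function.update w i u) with hA1
  set A2 := ∑ i ∈ S, Af α (Complex.I • v) (S.erase i) (Function.update w i u) with hA2
  set B1 := ∑ i ∈ Sᶜ, hermB n u (w i) * Af α v (insert i S) w with hB1
  set B2 := ∑ i ∈ Sᶜ, hermB n u (w i) * Af α (Complex.I • v) (insert i S) w with hB2
  set C1 := ∑ i ∈ S, Af α u (S.erase i) (Function.update w i v) with hC1
  set C2 := ∑ i ∈ S, Af α (Complex.I • u) (S.erase i) (Function.update w i v) with hC2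
  set D1 := ∑ i ∈ Sᶜ, hermB n v (w i) * Af α u (insert i S) w with hD1
  set D2 := ∑ i ∈ Sᶜ, hermB n v (w i) * Af α (Complex.I • u) (insert i S) w with hD2
  refine ⟨?_, ?_, ?_⟩
  · linear_combination (e1 - Complex.I * e2 - Complex.I * e3 - e4) / 2
      + ((A1 - B1 - C1 + D1) / 2) * Complex.I_sq
  · linear_combination (e1 - Complex.I * e2 + Complex.I * e3 + e4) / 2
      + ((- A1 + B1 - C1 + D1) / 2) * Complex.I_sq
  · linear_combination (e1 + Complex.I * e2 + Complex.I * e3 - e4) / 2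
      + ((- A1 + B1 + C1 - D1) / 2) * Complex.I_sq

lemma sumPf_erase (u v : Fin n → ℂ) (S : Finset (Fin m)) (w : Fin m → Fin n → ℂ) :
    ∑ i ∈ S, Pf α v (S.erase i) (Function.update w i u)
      = ((∑ i ∈ S, Af α v (S.erase i) (Function.update w i u))
        - Complex.I * ∑ i ∈ S, Af α (Complex.I • v) (S.erase i) (Function.update w i u)) / 2 := by
  rw [Finset.mul_sum, ← Finset.sum_sub_distrib, Finset.sum_div]
  rfl

lemma sumQf_erase (u v : Fin n → ℂ) (S : Finset (Fin m)) (w : Fin m → Fin n → ℂ) :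
    ∑ i ∈ S, Qf α v (S.erase i) (Function.update w i u)
      = ((∑ i ∈ S, Af α v (S.erase i) (Function.update w i u))
        + Complex.I * ∑ i ∈ S, Af α (Complex.I • v) (S.erase i) (Function.update w i u)) / 2 := by
  rw [Finset.mul_sum, ← Finset.sum_add_distrib, Finset.sum_div]
  rfl

lemma sumPf_insert (u v : Fin n → ℂ) (S : Finset (Fin m)) (w : Fin m → Fin n → ℂ) :
    ∑ i ∈ Sᶜ, hermB n u (w i) * Pf α v (insert i S) w
      = ((∑ i ∈ Sᶜ, hermB n u (w i) * Af α v (insert i S) w)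
        - Complex.I * ∑ i ∈ Sᶜ, hermB n u (w i) * Af α (Complex.I • v) (insert i S) w) / 2 := by
  rw [Finset.mul_sum, ← Finset.sum_sub_distrib, Finset.sum_div]
  refine Finset.sum_congr rfl fun i _ => ?_
  simp only [Pf]
  ring

lemma sumQf_insert (u v : Fin n → ℂ) (S : Finset (Fin m)) (w : Fin m → Fin n → ℂ) :
    ∑ i ∈ Sᶜ, hermB n u (w i) * Qf α v (insert i S) w
      = ((∑ i ∈ Sᶜ, hermB n u (w i) * Af α v (insert i S) w)
        + Complex.I * ∑ i ∈ Sᶜ, hermB n u (w i) * Af α (Complex.I • v) (insert i S) w) / 2 := by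
  rw [Finset.mul_sum, ← Finset.sum_add_distrib, Finset.sum_div]
  refine Finset.sum_congr rfl fun i _ => ?_
  simp only [Qf]
  ring

include hsym in
lemma SPsum (u v : Fin n → ℂ) (S : Finset (Fin m)) (w : Fin m → Fin n → ℂ) :
    ∑ i ∈ S, Pf α v (S.erase i) (Function.update w i u)
      = ∑ i ∈ S, Pf α u (S.erase i) (Function.update w i v) := by
  obtain ⟨h, -, -⟩ := atoms hsym u v S w
  rw [sumPf_erase, sumPf_erase]
  linear_combination h / 2

include hsym in
lemma SQsum (u v : Fin n → ℂ) (S : Finset (Fin m)) (w : Fin m → Fin n → ℂ) :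
    ∑ i ∈ Sᶜ, hermB n u (w i) * Pf α v (insert i S) w
      = ∑ i ∈ S, Qf α u (S.erase i) (Function.update w i v) := by
  obtain ⟨-, h, -⟩ := atoms hsym u v S w
  rw [sumPf_insert, sumQf_erase]
  linear_combination h / 2

include hsym in
lemma SQsum' (u v : Fin n → ℂ) (S : Finset (Fin m)) (w : Fin m → Fin n → ℂ) :
    ∑ i ∈ Sᶜ, hermB n u (w i) * Qf α v (insert i S) w
      = ∑ i ∈ Sᶜ, hermB n v (w i) * Qf α u (insert i S) w := by
  obtain ⟨-, -, h⟩ := atoms hsym u v S w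
  rw [sumQf_insert, sumQf_insert]
  linear_combination h / 2

variable (hsymval : ∀ v (σ : Equiv.Perm (Fin m)) (x : Fin m → Fin (n+1) → ℂ),
    α v (x ∘ σ) = α v x)
include hsymval

lemma Af_swap_erase {S : Finset (Fin m)} {i i' : Fin m} (hi : i ∈ S) (hi' : i' ∈ S)
    (v u : Fin n → ℂ) (w : Fin m → Fin n → ℂ) :
    Af α v (S.erase i) (Function.update w i u) = Af α v (S.erase i') (Function.update w i' u) := by
  by_cases hii : i = i'
  · subst hii; rfl
  have h := hsymval v (Equiv.swap i i') (tup n (S.erase i') (Function.update w i' u))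
  rw [show Af α v (S.erase i') (Function.update w i' u)
      = α v (tup n (S.erase i') (Function.update w i' u)) from rfl, ← h]
  unfold Af
  congr 1
  funext k
  simp only [Function.comp_apply]
  rcases eq_or_ne k i with hk | hk
  · subst hk
    rw [Equiv.swap_apply_left]
    simp [tup, Finset.notMem_erase]
  · rcases eq_or_ne k i' with hk' | hk'
    · subst hk'
      rw [Equiv.swap_apply_right]
      have h1 : k ∈ S.erase i := Finset.mem_erase.2 ⟨fun he => hii he.symm, hi'⟩
      have h2 : i ∈ S.erase k := Finset.mem_erase.2 ⟨hii, hi⟩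
      simp [tup, h1, h2]
    · rw [Equiv.swap_apply_of_ne_of_ne hk hk']
      by_cases hkS : k ∈ S
      · have h1 : k ∈ S.erase i := Finset.mem_erase.2 ⟨hk, hkS⟩
        have h2 : k ∈ S.erase i' := Finset.mem_erase.2 ⟨hk', hkS⟩
        simp [tup, h1, h2]
      · have h1 : k ∉ S.erase i := fun hh => hkS (Finset.mem_of_mem_erase hh)
        have h2 : k ∉ S.erase i' := fun hh => hkS (Finset.mem_of_mem_erase hh)
        simp [tup, h1, h2, Function.update_of_ne hk, Function.update_of_ne hk']

lemma Af_swap_insert {S : Finset (Fin m)} {i i' : Fin m} (hi : i ∉ S) (hi' : i' ∉ S)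
    (hii : i ≠ i') (v z : Fin n → ℂ) (w : Fin m → Fin n → ℂ) :
    Af α v (insert i S) (Function.update w i' z)
      = Af α v (insert i' S) (Function.update w i z) := by
  have h := hsymval v (Equiv.swap i i') (tup n (insert i' S) (Function.update w i z))
  rw [show Af α v (insert i' S) (Function.update w i z)
      = α v (tup n (insert i' S) (Function.update w i z)) from rfl, ← h]
  unfold Af
  congr 1
  funext k
  simp only [Function.comp_apply]
  rcases eq_or_ne k i with hk | hk
  · subst hk
    rw [Equiv.swap_apply_left]
    have h1 : k ∈ insert k S := Finset.mem_insert_self k S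
    have h2 : i' ∈ insert i' S := Finset.mem_insert_self i' S
    simp [tup, h1, h2]
  · rcases eq_or_ne k i' with hk' | hk'
    · subst hk'
      rw [Equiv.swap_apply_right]
      have h1 : k ∉ insert i S := by
        simp [Finset.mem_insert, hk, hi']
      have h2 : i ∉ insert k S := by
        simp [Finset.mem_insert, hii, hi]
      simp [tup, h1, h2, Function.update_of_ne hk]
    · rw [Equiv.swap_apply_of_ne_of_ne hk hk']
      by_cases hkS : k ∈ S
      · have h1 : k ∈ insert i S := Finset.mem_insert_of_mem hkS
        have h2 : k ∈ insert i' S := Finset.mem_insert_of_mem hkS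
        simp [tup, h1, h2]
      · have h1 : k ∉ insert i S := by simp [Finset.mem_insert, hk, hkS]
        have h2 : k ∉ insert i' S := by simp [Finset.mem_insert, hk', hkS]
        simp [tup, h1, h2, Function.update_of_ne hk, Function.update_of_ne hk']

lemma Pf_swap_erase {S : Finset (Fin m)} {i i' : Fin m} (hi : i ∈ S) (hi' : i' ∈ S)
    (v u : Fin n → ℂ) (w : Fin m → Fin n → ℂ) :
    Pf α v (S.erase i) (Function.update w i u) = Pf α v (S.erase i') (Function.update w i' u) := by
  unfold Pf
  rw [Af_swap_erase hsymval hi hi' v u w, Af_swap_erase hsymval hi hi' (Complex.I • v) u w]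

lemma Qf_swap_erase {S : Finset (Fin m)} {i i' : Fin m} (hi : i ∈ S) (hi' : i' ∈ S)
    (v u : Fin n → ℂ) (w : Fin m → Fin n → ℂ) :
    Qf α v (S.erase i) (Function.update w i u) = Qf α v (S.erase i') (Function.update w i' u) := by
  unfold Qf
  rw [Af_swap_erase hsymval hi hi' v u w, Af_swap_erase hsymval hi hi' (Complex.I • v) u w]

lemma Pf_swap_insert {S : Finset (Fin m)} {i i' : Fin m} (hi : i ∉ S) (hi' : i' ∉ S)
    (hii : i ≠ i') (v z : Fin n → ℂ) (w : Fin m → Fin n → ℂ) :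
    Pf α v (insert i S) (Function.update w i' z)
      = Pf α v (insert i' S) (Function.update w i z) := by
  unfold Pf
  rw [Af_swap_insert hsymval hi hi' hii v z w, Af_swap_insert hsymval hi hi' hii (Complex.I • v) z w]

end Rel

section Der
variable {α : (Fin n → ℂ) → MultilinearMap ℂ (fun _ : Fin m => (Fin (n+1) → ℂ)) ℂ}
variable (hsymval : ∀ v (σ : Equiv.Perm (Fin m)) (x : Fin m → Fin (n+1) → ℂ),
    α v (x ∘ σ) = α v x)
variable (hadd : ∀ u v, α (u + v) = α u + α v)
variable (hsmul : ∀ (r : ℝ) (v : Fin n → ℂ), α ((r : ℂ) • v) = (r : ℂ) • α v)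
variable (hsym : ∀ u v, rhoDual n m (xi n u) (α v) = rhoDual n m (xi n v) (α u))

lemma Pf_upd_mem {S : Finset (Fin m)} {i : Fin m} (hi : i ∈ S)
    (v z : Fin n → ℂ) (w : Fin m → Fin n → ℂ) :
    Pf α v S (Function.update w i z) = Pf α v S w := by
  unfold Pf Af
  rw [tup_upd_mem hi]

lemma Qf_univ_indep (v : Fin n → ℂ) (w w' : Fin m → Fin n → ℂ) :
    Qf α v Finset.univ w = Qf α v Finset.univ w' := by
  unfold Qf Af
  have h : tup n (Finset.univ : Finset (Fin m)) w = tup n Finset.univ w' := by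
    funext i; simp [tup]
  rw [h]

include hsymval hsym in
lemma SP1 {T : Finset (Fin m)} {i : Fin m} (hi : i ∉ T) (u v : Fin n → ℂ)
    (w : Fin m → Fin n → ℂ) :
    Pf α v T (Function.update w i u) = Pf α u T (Function.update w i v) := by
  classical
  have h := SPsum hsym u v (insert i T) w
  have hins : i ∈ insert i T := Finset.mem_insert_self i T
  have hL : ∀ k ∈ insert i T, Pf α v ((insert i T).erase k) (Function.update w k u)
      = Pf α v T (Function.update w i u) := by
    intro k hk
    rw [Pf_swap_erase hsymval hk hins v u w, Finset.erase_insert hi]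
  have hR : ∀ k ∈ insert i T, Pf α u ((insert i T).erase k) (Function.update w k v)
      = Pf α u T (Function.update w i v) := by
    intro k hk
    rw [Pf_swap_erase hsymval hk hins u v w, Finset.erase_insert hi]
  rw [Finset.sum_congr rfl hL, Finset.sum_congr rfl hR, Finset.sum_const, Finset.sum_const,
    nsmul_eq_mul, nsmul_eq_mul] at h
  have hcard : (((insert i T).card : ℂ)) ≠ 0 :=
    Nat.cast_ne_zero.mpr (Finset.card_ne_zero.mpr ⟨i, hins⟩)
  exact mul_left_cancel₀ hcard h

variable (htr : ∑ j : Fin n,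
    (rhoDual n m (xi n (Pi.single j 1)) (α (Pi.single j 1))
      + rhoDual n m (xi n (Pi.single j Complex.I)) (α (Pi.single j Complex.I))) = 0)

include htr in
lemma traceRel (S : Finset (Fin m)) (w : Fin m → Fin n → ℂ) :
    ∑ j : Fin n, ((∑ i ∈ S, Qf α (Pi.single j 1) (S.erase i) (Function.update w i (Pi.single j 1)))
      + ∑ i ∈ Sᶜ, hermB n (Pi.single j 1) (w i) * Pf α (Pi.single j 1) (insert i S) w) = 0 := by
  classical
  have hIe : ∀ j : Fin n, (Pi.single j Complex.I : Fin n → ℂ)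
      = Complex.I • (Pi.single j 1 : Fin n → ℂ) := by
    intro j
    rw [← Pi.single_smul, smul_eq_mul, mul_one]
  have h := DFunLike.congr_fun htr (tup n S w)
  rw [MultilinearMap.sum_apply, MultilinearMap.zero_apply] at h
  have key : ∀ j : Fin n,
      (rhoDual n m (xi n (Pi.single j 1)) (α (Pi.single j 1))
        + rhoDual n m (xi n (Pi.single j Complex.I)) (α (Pi.single j Complex.I))) (tup n S w)
      = -2 * ((∑ i ∈ S, Qf α (Pi.single j 1) (S.erase i) (Function.update w i (Pi.single j 1)))
          + ∑ i ∈ Sᶜ, hermB n (Pi.single j 1) (w i) * Pf α (Pi.single j 1) (insert i S) w) := by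
    intro j
    rw [MultilinearMap.add_apply, hIe j, rhoDual_apply, rhoDual_apply, rho_tup, rho_tup,
      sumS_smul, sumC_smul, sumQf_erase, sumPf_insert]
    ring
  rw [Finset.sum_congr rfl fun j _ => key j, ← Finset.mul_sum] at h
  have h2 : (-2 : ℂ) ≠ 0 := by norm_num
  exact (mul_eq_zero.mp h).resolve_left h2

include hadd hsmul hsym htr in
lemma Tpp (S : Finset (Fin m)) (w : Fin m → Fin n → ℂ) :
    ∑ i ∈ Sᶜ, Pf α (w i) (insert i S) w = 0 := by
  have h := traceRel htr S w
  have hq : ∀ j : Fin n,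
      (∑ i ∈ S, Qf α (Pi.single j 1) (S.erase i) (Function.update w i (Pi.single j 1)))
      = ∑ i ∈ Sᶜ, hermB n (Pi.single j 1) (w i) * Pf α (Pi.single j 1) (insert i S) w :=
    fun j => (SQsum hsym (Pi.single j 1) (Pi.single j 1) S w).symm
  rw [Finset.sum_congr rfl (fun j _ => by rw [hq j, ← two_mul]), ← Finset.mul_sum] at h
  have h2 := (mul_eq_zero.mp h).resolve_left (by norm_num : (2:ℂ) ≠ 0)
  rw [Finset.sum_comm] at h2
  have h3 : ∀ i ∈ Sᶜ, (∑ j, hermB n (Pi.single j 1) (w i) * Pf α (Pi.single j 1) (insert i S) w)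
      = Pf α (w i) (insert i S) w := by
    intro i _
    rw [Finset.sum_congr rfl fun j _ => by rw [hermB_single]]
    exact Pf_combo hadd hsmul (w i) (insert i S) w
  rw [Finset.sum_congr rfl h3] at h2
  exact h2

include hsymval hadd hsmul hsym htr in
lemma Pzero {S : Finset (Fin m)} (hS : S.Nonempty) (v : Fin n → ℂ)
    (w : Fin m → Fin n → ℂ) :
    Pf α v S w = 0 := by
  classical
  obtain ⟨i, hi⟩ := hS
  set S₀ := S.erase i with hS₀
  set w' := Function.update w i v with hw'
  have hiS : i ∉ S₀ := Finset.notMem_erase i S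
  have hins : insert i S₀ = S := Finset.insert_erase hi
  have h1 : Pf α v S w = Pf α (w' i) (insert i S₀) w' := by
    rw [hins]
    have : w' i = v := Function.update_self i v w
    rw [this, hw']
    exact (Pf_upd_mem hi v v w).symm
  have h2 := Tpp hadd hsmul hsym htr S₀ w'
  have hi0 : i ∈ S₀ᶜ := Finset.mem_compl.2 hiS
  have heq : ∀ k ∈ S₀ᶜ, Pf α (w' k) (insert k S₀) w' = Pf α (w' i) (insert i S₀) w' := by
    intro k hk
    rcases eq_or_ne k i with rfl | hki
    · rfl
    · have hkS : k ∉ S₀ := Finset.mem_compl.1 hk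
      have hiT : i ∉ insert k S₀ := by
        simp [Finset.mem_insert, hiS, Ne.symm hki]
      calc Pf α (w' k) (insert k S₀) w'
          = Pf α (w' k) (insert k S₀) (Function.update w' i (w' i)) := by
            rw [Function.update_eq_self]
        _ = Pf α (w' i) (insert k S₀) (Function.update w' i (w' k)) :=
            SP1 hsymval hsym hiT (w' i) (w' k) w'
        _ = Pf α (w' i) (insert i S₀) (Function.update w' k (w' k)) :=
            Pf_swap_insert hsymval hkS hiS hki (w' i) (w' k) w'
        _ = Pf α (w' i) (insert i S₀) w' := by rw [Function.update_eq_self]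
  rw [Finset.sum_congr rfl heq, Finset.sum_const, nsmul_eq_mul] at h2
  have hc : ((S₀ᶜ.card : ℂ)) ≠ 0 :=
    Nat.cast_ne_zero.mpr (Finset.card_ne_zero.mpr ⟨i, hi0⟩)
  rw [h1]
  exact (mul_eq_zero.mp h2).resolve_left hc

include hsymval hadd hsmul hsym htr in
lemma QzeroNe {T : Finset (Fin m)} (hT : T ≠ Finset.univ) (u : Fin n → ℂ)
    (w : Fin m → Fin n → ℂ) :
    Qf α u T w = 0 := by
  classical
  have hex : ∃ i, i ∉ T := by
    by_contra h
    push_neg at h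
    exact hT (Finset.eq_univ_iff_forall.2 h)
  obtain ⟨i, hiT⟩ := hex
  set S := insert i T with hS
  have h := SQsum hsym u (w i) S w
  have hzero : ∀ k ∈ Sᶜ, hermB n u (w k) * Pf α (w i) (insert k S) w = 0 := by
    intro k _
    rw [Pzero hsymval hadd hsmul hsym htr (Finset.insert_nonempty k S) (w i) w, mul_zero]
  rw [Finset.sum_congr rfl hzero, Finset.sum_const, smul_zero] at h
  have hins : i ∈ S := Finset.mem_insert_self i T
  have heq : ∀ k ∈ S, Qf α u (S.erase k) (Function.update w k (w i))
      = Qf α u T w := by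
    intro k hk
    rw [Qf_swap_erase hsymval hk hins u (w i) w, Finset.erase_insert hiT,
      Function.update_eq_self]
  rw [Finset.sum_congr rfl heq, Finset.sum_const, nsmul_eq_mul] at h
  have hc : ((S.card : ℂ)) ≠ 0 :=
    Nat.cast_ne_zero.mpr (Finset.card_ne_zero.mpr ⟨i, hins⟩)
  exact (mul_eq_zero.mp h.symm).resolve_left hc

include hsymval hadd hsmul hsym htr in
lemma QzeroUniv (hn : 1 < n) (hm : 1 ≤ m) (u : Fin n → ℂ) (w : Fin m → Fin n → ℂ) :
    Qf α u Finset.univ w = 0 := by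
  classical
  have hn0 : 0 < n := lt_trans one_pos hn
  set i₀ : Fin m := ⟨0, hm⟩ with hi₀
  have hcompl : ((Finset.univ.erase i₀ : Finset (Fin m)))ᶜ = {i₀} := by
    rw [Finset.compl_erase, Finset.compl_univ, LawfulSingleton.insert_empty_eq]
  have hins : insert i₀ (Finset.univ.erase i₀) = (Finset.univ : Finset (Fin m)) :=
    Finset.insert_erase (Finset.mem_univ i₀)
  have key : ∀ (p q z : Fin n → ℂ),
      hermB n p z * Qf α q Finset.univ w = hermB n q z * Qf α p Finset.univ w := by
    intro p q z
    have h := SQsum' hsym p q (Finset.univ.erase i₀) (Function.update w i₀ z)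
    rw [hcompl, Finset.sum_singleton, Finset.sum_singleton, hins,
      Function.update_self] at h
    rwa [Qf_univ_indep q (Function.update w i₀ z) w,
      Qf_univ_indep p (Function.update w i₀ z) w] at h
  set a : Fin n := ⟨0, hn0⟩ with ha
  set b : Fin n := ⟨1, hn⟩ with hb
  have hab : a ≠ b := by
    simp [ha, hb, Fin.ext_iff]
  have h1 : hermB n (Pi.single a 1) (Pi.single b (1:ℂ)) = 0 := by
    rw [hermB_single]
    simp [Pi.single_apply, hab]
  have hbb : hermB n (Pi.single b 1) (Pi.single b (1:ℂ)) = 1 := by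
    rw [hermB_single]
    simp
  have haa : hermB n (Pi.single a 1) (Pi.single a (1:ℂ)) = 1 := by
    rw [hermB_single]
    simp
  have hqa : Qf α (Pi.single a 1) Finset.univ w = 0 := by
    have h := key (Pi.single b 1) (Pi.single a 1) (Pi.single b 1)
    rw [hbb, h1, one_mul, zero_mul] at h
    exact h
  have h := key (Pi.single a 1) u (Pi.single a 1)
  rw [haa, hqa, one_mul, mul_zero] at h
  exact h

include hsymval hadd hsmul hsym htr in
lemma Qzero (hn : 1 < n) (hm : 1 ≤ m) (u : Fin n → ℂ) (S : Finset (Fin m))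
    (w : Fin m → Fin n → ℂ) :
    Qf α u S w = 0 := by
  by_cases hS : S = Finset.univ
  · subst hS
    exact QzeroUniv hsymval hadd hsmul hsym htr hn hm u w
  · exact QzeroNe hsymval hadd hsmul hsym htr hS u w

include hsymval hadd hsmul hsym htr in
lemma AfI (hn : 1 < n) (hm : 1 ≤ m) (v : Fin n → ℂ) (S : Finset (Fin m))
    (w : Fin m → Fin n → ℂ) :
    Af α (Complex.I • v) S w = Complex.I * Af α v S w := by
  have h := Qzero hsymval hadd hsmul hsym htr hn hm v S w
  unfold Qf at h
  have h' : Af α v S w + Complex.I * Af α (Complex.I • v) S w = 0 := by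
    linear_combination 2 * h
  linear_combination (-Complex.I) * h' + (Af α (Complex.I • v) S w) * Complex.I_sq

include hsymval hadd hsmul hsym htr in
lemma Avanish (hn : 1 < n) (hm : 1 ≤ m) {S : Finset (Fin m)} (hS : S.Nonempty)
    (v : Fin n → ℂ) (w : Fin m → Fin n → ℂ) :
    Af α v S w = 0 := by
  rw [Pf_add_Qf, Pzero hsymval hadd hsmul hsym htr hS,
    Qzero hsymval hadd hsmul hsym htr hn hm, add_zero]

lemma expand (v : Fin n → ℂ) (x : Fin m → Fin (n+1) → ℂ) :
    α v x = ∑ S : Finset (Fin m),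
      (∏ i ∈ S, x i (Fin.last n)) * Af α v S (fun i j => x i (Fin.castSucc j)) := by
  classical
  set b : Fin m → Fin (n+1) → ℂ := fun i => Fin.snoc (fun j => x i (Fin.castSucc j)) 0 with hb
  set a : Fin m → Fin (n+1) → ℂ := fun i => x i (Fin.last n) • eV n with ha
  have hx : x = a + b := by
    funext i k
    refine Fin.lastCases ?_ ?_ k
    · simp [ha, hb, eV, Pi.single_apply]
    · intro j
      simp [ha, hb, eV, Pi.single_apply, (Fin.castSucc_lt_last j).ne]
  have h1 : α v x = ∑ S : Finset (Fin m), α v (S.piecewise a b) := by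
    conv_lhs => rw [hx]
    exact (α v).map_add_univ a b
  rw [h1]
  refine Finset.sum_congr rfl fun S _ => ?_
  have hm' : S.piecewise a b
      = S.piecewise (fun i => x i (Fin.last n) • (S.piecewise (fun _ => eV n) b) i)
          (S.piecewise (fun _ => eV n) b) := by
    funext k
    by_cases hk : k ∈ S <;> simp [Finset.piecewise, hk, ha]
  rw [hm', (α v).map_piecewise_smul, smul_eq_mul]
  congr 1

lemma Af_empty_apply (v : Fin n → ℂ) (w : Fin m → Fin n → ℂ) :
    α v (fun i => Fin.snoc (w i) 0) = Af α v ∅ w := by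
  unfold Af
  congr 1

lemma swap_succ {M : ℕ} (a b : Fin M) (k : Fin M) :
    Equiv.swap a.succ b.succ k.succ = (Equiv.swap a b k).succ := by
  rcases eq_or_ne k a with rfl | h1
  · rw [Equiv.swap_apply_left, Equiv.swap_apply_left]
  · rcases eq_or_ne k b with rfl | h2
    · rw [Equiv.swap_apply_right, Equiv.swap_apply_right]
    · rw [Equiv.swap_apply_of_ne_of_ne h1 h2,
        Equiv.swap_apply_of_ne_of_ne (fun h => h1 (Fin.succ_injective _ h))
          (fun h => h2 (Fin.succ_injective _ h))]

include hsymval hadd hsmul hsym htr in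
lemma keySwap0 (hn : 1 < n) (hm : 1 ≤ m) (j : Fin m) (y : Fin (m+1) → Fin n → ℂ) :
    α (y (Equiv.swap 0 j.succ 0)) (fun i => Fin.snoc (y (Equiv.swap 0 j.succ i.succ)) 0)
      = α (y 0) (fun i => Fin.snoc (y i.succ) 0) := by
  classical
  set ws : Fin m → Fin n → ℂ := fun k => y k.succ with hws
  have h0 : Equiv.swap (0 : Fin (m+1)) j.succ 0 = j.succ := Equiv.swap_apply_left _ _
  have htup : (fun i => Fin.snoc (y (Equiv.swap (0 : Fin (m+1)) j.succ i.succ)) 0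
        : Fin m → Fin (n+1) → ℂ)
      = fun i => Fin.snoc (Function.update ws j (y 0) i) 0 := by
    funext i
    rcases eq_or_ne i j with rfl | hij
    · rw [Equiv.swap_apply_right, Function.update_self]
    · rw [Equiv.swap_apply_of_ne_of_ne (Fin.succ_ne_zero i)
        (fun h => hij (Fin.succ_injective _ h)), Function.update_of_ne hij]
  have hAP : ∀ (v : Fin n → ℂ) (w : Fin m → Fin n → ℂ),
      Af α v (∅ : Finset (Fin m)) w = Pf α v ∅ w := by
    intro v w
    rw [Pf_add_Qf, Qzero hsymval hadd hsmul hsym htr hn hm, add_zero]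
  rw [h0, htup, Af_empty_apply, Af_empty_apply, hAP, hAP,
    SP1 hsymval hsym (Finset.notMem_empty j) (y 0) (y j.succ) ws,
    show Function.update ws j (y j.succ) = ws from Function.update_eq_self j ws]

include hsymval hadd hsmul hsym htr in
lemma keySwap (hn : 1 < n) (hm : 1 ≤ m) (a b : Fin (m+1)) (y : Fin (m+1) → Fin n → ℂ) :
    α (y (Equiv.swap a b 0)) (fun i => Fin.snoc (y (Equiv.swap a b i.succ)) 0)
      = α (y 0) (fun i => Fin.snoc (y i.succ) 0) := by
  classical
  refine Fin.cases ?_ ?_ a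
  · refine Fin.cases ?_ ?_ b
    · rw [Equiv.swap_self]
      simp
    · intro j
      exact keySwap0 hsymval hadd hsmul hsym htr hn hm j y
  · intro a'
    refine Fin.cases ?_ ?_ b
    · rw [Equiv.swap_comm]
      exact keySwap0 hsymval hadd hsmul hsym htr hn hm a' y
    · intro b'
      have h0 : Equiv.swap a'.succ b'.succ (0 : Fin (m+1)) = 0 :=
        Equiv.swap_apply_of_ne_of_ne (Fin.succ_ne_zero a').symm (Fin.succ_ne_zero b').symm
      rw [h0]
      have htup : (fun i => Fin.snoc (y (Equiv.swap a'.succ b'.succ i.succ)) 0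
            : Fin m → Fin (n+1) → ℂ)
          = (fun i => Fin.snoc (y i.succ) 0) ∘ (Equiv.swap a' b') := by
        funext i
        simp only [Function.comp_apply, swap_succ]
      rw [htup]
      exact hsymval (y 0) (Equiv.swap a' b') _

end Der
end ES
end ESLemmas

open ES in
/-- Dual version: if `α : 𝔭 → W' = S^m(V)'` is ℝ-linear, symmetric and trace free,
then `α` is ℂ-linear, takes values in `S^m(V_1')` (forms vanishing whenever some
argument equals `e_{n+1}`), and the `(m+1)`-linear form
`(u, v_1, …, v_m) ↦ α(ξ_u)(v_1, …, v_m)` on `V_1` is fully symmetric. -/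
theorem eichler_shimura_harmonic_dual (n m : ℕ) (hn : 1 < n) (hm : 1 ≤ m)
    (α : (Fin n → ℂ) → MultilinearMap ℂ (fun _ : Fin m => (Fin (n+1) → ℂ)) ℂ)
    (hsymval : ∀ v (σ : Equiv.Perm (Fin m)) (x : Fin m → Fin (n+1) → ℂ),
        α v (x ∘ σ) = α v x)
    (hadd : ∀ u v, α (u + v) = α u + α v)
    (hsmul : ∀ (r : ℝ) (v : Fin n → ℂ), α ((r : ℂ) • v) = (r : ℂ) • α v)
    (hsym : ∀ u v, rhoDual n m (xi n u) (α v) = rhoDual n m (xi n v) (α u))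
    (htr : ∑ j : Fin n,
        (rhoDual n m (xi n (Pi.single j 1)) (α (Pi.single j 1))
          + rhoDual n m (xi n (Pi.single j Complex.I)) (α (Pi.single j Complex.I))) = 0) :
    (∀ v, α (Complex.I • v) = Complex.I • α v)
    ∧ (∀ v (x : Fin m → Fin (n+1) → ℂ) (i : Fin m),
        x i = Pi.single (Fin.last n) 1 → α v x = 0)
    ∧ (∀ (σ : Equiv.Perm (Fin (m+1))) (y : Fin (m+1) → Fin n → ℂ),
        α (y (σ 0)) (fun i => Fin.snoc (y (σ i.succ)) 0)
          = α (y 0) (fun i => Fin.snoc (y i.succ) 0)) := by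
  classical
  refine ⟨?_, ?_, ?_⟩
  · intro v
    apply MultilinearMap.ext
    intro x
    rw [MultilinearMap.smul_apply, expand (α := α) (Complex.I • v) x, expand (α := α) v x,
      Finset.smul_sum]
    refine Finset.sum_congr rfl fun S _ => ?_
    rw [AfI hsymval hadd hsmul hsym htr hn hm, smul_eq_mul]
    ring
  · intro v x i hxi
    rw [expand (α := α) v x]
    refine Finset.sum_eq_zero fun S _ => ?_
    by_cases hiS : i ∈ S
    · rw [Avanish hsymval hadd hsmul hsym htr hn hm ⟨i, hiS⟩, mul_zero]
    · have hz : (fun j => x i (Fin.castSucc j)) = (0 : Fin n → ℂ) := by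
        funext j
        rw [hxi]
        simp [Pi.single_apply, (Fin.castSucc_lt_last j).ne]
      have hzero : tup n S (fun k j => x k (Fin.castSucc j)) i = 0 := by
        simp only [tup, hiS, if_neg hiS, hz]
        funext k
        refine Fin.lastCases ?_ ?_ k <;> simp
      have hw : Af α v S (fun k j => x k (Fin.castSucc j)) = 0 :=
        (α v).map_coord_zero i hzero
      rw [hw, mul_zero]
  · intro σ
    refine Equiv.Perm.swap_induction_on σ (fun y => by simp) ?_
    intro f a b hab IH y
    have hstep : α (y ((Equiv.swap a b * f) 0))
            (fun i => Fin.snoc (y ((Equiv.swap a b * f) i.succ)) 0)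
          = α ((fun z => y (Equiv.swap a b z)) (f 0))
            (fun i => Fin.snoc ((fun z => y (Equiv.swap a b z)) (f i.succ)) 0) := rfl
    rw [hstep, IH (fun z => y (Equiv.swap a b z))]
    exact keySwap hsymval hadd hsmul hsym htr hn hm a b y

end
end

section
/- Let m ≥ 2 and 1 ≤ k ≤ m−1. For every v ∈ ℂⁿ one has ρ_m(ξ_v^+)(W_k) ⊆ W_{k+1}, ρ_m(ξ_v^-)(W_k) ⊆ W_{k−1}, and hence ρ_m(ξ_v)(W_k) ⊆ W_{k−1} ⊕ W_{k+1}. Moreover, if v ≠ 0 then the restrictions ρ_m(ξ_v^+)|_{W_k} : W_k → W_{k+1} and ρ_m(ξ_v^-)|_{W_k} : W_k → W_{k−1} are both nonzero maps. -/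
open MvPolynomial

noncomputable section

lemma rho_apply (n : ℕ) (M : Matrix (Fin (n+1)) (Fin (n+1)) ℂ) (p : MvPolynomial (Fin (n+1)) ℂ) :
    rho n M p = ∑ i, ∑ j, M j i • (X j * pderiv i p) := by
  simp [rho, LinearMap.sum_apply]

lemma rho_xiP_apply (n : ℕ) (v : Fin n → ℂ) (p : MvPolynomial (Fin (n+1)) ℂ) :
    rho n (xiP n v) p = ∑ j : Fin n, v j • (X j.castSucc * pderiv (Fin.last n) p) := by
  rw [rho_apply]
  rw [Fin.sum_univ_castSucc]
  have h1 : ∀ i : Fin n, (∑ j, xiP n v j i.castSucc • (X j * pderiv i.castSucc p)) = 0 := by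
    intro i
    apply Finset.sum_eq_zero
    intro j _
    have : xiP n v j i.castSucc = 0 := by
      simp only [xiP, Matrix.of_apply]
      rw [dif_neg]
      rintro ⟨-, h⟩
      exact (Fin.castSucc_lt_last i).ne h
    simp [this]
  rw [Finset.sum_eq_zero (fun i _ => h1 i), zero_add, Fin.sum_univ_castSucc]
  have h2 : xiP n v (Fin.last n) (Fin.last n) = 0 := by
    simp only [xiP, Matrix.of_apply]
    rw [dif_neg]
    rintro ⟨h, -⟩
    simp at h
  rw [h2, zero_smul, add_zero]
  refine Finset.sum_congr rfl fun j _ => ?_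
  have : xiP n v j.castSucc (Fin.last n) = v j := by
    simp only [xiP, Matrix.of_apply, Fin.coe_castSucc, Fin.is_lt, and_true, dif_pos, Fin.eta]
  rw [this]

lemma rho_xiM_apply (n : ℕ) (v : Fin n → ℂ) (p : MvPolynomial (Fin (n+1)) ℂ) :
    rho n (xiM n v) p
      = ∑ i : Fin n, (starRingEnd ℂ) (v i) • (X (Fin.last n) * pderiv i.castSucc p) := by
  rw [rho_apply]
  rw [Fin.sum_univ_castSucc]
  have hlast : (∑ j, xiM n v j (Fin.last n) • (X j * pderiv (Fin.last n) p)) = 0 := by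
    apply Finset.sum_eq_zero
    intro j _
    have : xiM n v j (Fin.last n) = 0 := by
      simp only [xiM, Matrix.of_apply]
      rw [dif_neg]
      rintro ⟨-, h⟩
      simp at h
    simp [this]
  rw [hlast, add_zero]
  refine Finset.sum_congr rfl fun i _ => ?_
  rw [Fin.sum_univ_castSucc]
  have h1 : ∀ j : Fin n, xiM n v j.castSucc i.castSucc = 0 := by
    intro j
    simp only [xiM, Matrix.of_apply]
    rw [dif_neg]
    rintro ⟨h, -⟩
    exact (Fin.castSucc_lt_last j).ne h
  rw [Finset.sum_eq_zero (fun j _ => by rw [h1 j, zero_smul]), zero_add]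
  have : xiM n v (Fin.last n) i.castSucc = (starRingEnd ℂ) (v i) := by
    simp only [xiM, Matrix.of_apply, Fin.coe_castSucc, Fin.is_lt, true_and, dif_pos, Fin.eta]
  rw [this]

lemma sum_univ_single {N : ℕ} (j : Fin N) (c : ℕ) : (∑ i, Finsupp.single j c i) = c := by
  simp [Finsupp.single_apply]

lemma sum_univ_add {N : ℕ} (d e : Fin N →₀ ℕ) : (∑ i, (d + e) i) = (∑ i, d i) + ∑ i, e i := by
  simp [Finsupp.add_apply, Finset.sum_add_distrib]

lemma sum_univ_sub_single {N : ℕ} (d : Fin N →₀ ℕ) (j : Fin N) (hj : 1 ≤ d j) :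
    (∑ i, (d - Finsupp.single j 1 : Fin N →₀ ℕ) i) = (∑ i, d i) - 1 := by
  have h : (d - Finsupp.single j 1) + Finsupp.single j 1 = d :=
    tsub_add_cancel_of_le (Finsupp.single_le_iff.mpr hj)
  have := sum_univ_add (d - Finsupp.single j 1) (Finsupp.single j 1)
  rw [h, sum_univ_single] at this
  omega

lemma mem_Wcomp (n m k : ℕ) (d : Fin (n+1) →₀ ℕ) (c : ℂ)
    (h1 : (∑ i, d i) = m) (h2 : d (Fin.last n) = m - k) :
    (monomial d c : MvPolynomial (Fin (n+1)) ℂ) ∈ Wcomp n m k := by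
  have : (monomial d c : MvPolynomial (Fin (n+1)) ℂ) = c • monomial d 1 := by
    rw [smul_monomial, smul_eq_mul, mul_one]
  rw [this]
  exact Submodule.smul_mem _ _ (Submodule.subset_span ⟨d, h1, h2, rfl⟩)

lemma X_mul_monomial' {N : ℕ} (j : Fin N) (s : Fin N →₀ ℕ) (a : ℂ) :
    (X j : MvPolynomial (Fin N) ℂ) * monomial s a = monomial (Finsupp.single j 1 + s) a := by
  rw [X, monomial_mul, one_mul]

lemma rho_xiP_monomial_mem (n m k : ℕ) (hmk : 1 ≤ m - k) (v : Fin n → ℂ)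
    (d : Fin (n+1) →₀ ℕ) (h1 : (∑ i, d i) = m) (h2 : d (Fin.last n) = m - k) :
    rho n (xiP n v) (monomial d 1) ∈ Wcomp n m (k + 1) := by
  rw [rho_xiP_apply]
  apply Submodule.sum_mem
  intro j _
  rw [pderiv_monomial, X_mul_monomial']
  apply Submodule.smul_mem
  have hd : 1 ≤ d (Fin.last n) := by omega
  apply mem_Wcomp
  · rw [sum_univ_add, sum_univ_single, sum_univ_sub_single d _ hd, h1]
    omega
  · rw [Finsupp.add_apply, Finsupp.tsub_apply, Finsupp.single_apply, Finsupp.single_apply]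
    rw [if_neg (Fin.castSucc_lt_last j).ne, if_pos rfl, h2]
    omega

lemma rho_xiM_monomial_mem (n m k : ℕ) (hk : 1 ≤ k) (hkm : k ≤ m) (v : Fin n → ℂ)
    (d : Fin (n+1) →₀ ℕ) (h1 : (∑ i, d i) = m) (h2 : d (Fin.last n) = m - k) :
    rho n (xiM n v) (monomial d 1) ∈ Wcomp n m (k - 1) := by
  rw [rho_xiM_apply]
  apply Submodule.sum_mem
  intro i _
  rw [pderiv_monomial, X_mul_monomial']
  apply Submodule.smul_mem
  by_cases hdi : d i.castSucc = 0
  · rw [hdi]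
    simp
  · apply mem_Wcomp
    · rw [sum_univ_add, sum_univ_single, sum_univ_sub_single d _ (by omega), h1]
      omega
    · rw [Finsupp.add_apply, Finsupp.tsub_apply, Finsupp.single_apply, Finsupp.single_apply]
      rw [if_pos rfl, if_neg (Fin.castSucc_lt_last i).ne, h2]
      omega

lemma rho_mem_of_span (n : ℕ) (M : Matrix (Fin (n+1)) (Fin (n+1)) ℂ)
    (S : Set (MvPolynomial (Fin (n+1)) ℂ)) (T : Submodule ℂ (MvPolynomial (Fin (n+1)) ℂ))
    (h : ∀ s ∈ S, rho n M s ∈ T) :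
    ∀ w ∈ Submodule.span ℂ S, rho n M w ∈ T := by
  intro w hw
  have hle : Submodule.span ℂ S ≤ T.comap (rho n M) :=
    Submodule.span_le.mpr fun s hs => h s hs
  exact hle hw

lemma rho_add (n : ℕ) (A B : Matrix (Fin (n+1)) (Fin (n+1)) ℂ) :
    rho n (A + B) = rho n A + rho n B := by
  simp [rho, Matrix.add_apply, add_smul, Finset.sum_add_distrib]

lemma d0_spec (n m k : ℕ) (t : Fin n) :
    let d0 : Fin (n+1) →₀ ℕ :=
      Finsupp.single t.castSucc k + Finsupp.single (Fin.last n) (m - k)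
    d0 (Fin.last n) = m - k ∧ d0 t.castSucc = k := by
  constructor <;>
    simp [Finsupp.add_apply, Finsupp.single_apply, (Fin.castSucc_lt_last t).ne,
      (Fin.castSucc_lt_last t).ne']

lemma rho_xiP_ne_zero (n m k : ℕ) (hk : 1 ≤ k) (hk' : k ≤ m - 1) (hm : 2 ≤ m)
    (v : Fin n → ℂ) (t : Fin n) (ht : v t ≠ 0) :
    rho n (xiP n v)
      (monomial (Finsupp.single t.castSucc k + Finsupp.single (Fin.last n) (m - k)) 1) ≠ 0 := by
  set d0 : Fin (n+1) →₀ ℕ :=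
    Finsupp.single t.castSucc k + Finsupp.single (Fin.last n) (m - k) with hd0
  obtain ⟨hL, hT⟩ := d0_spec n m k t
  set E : Fin (n+1) →₀ ℕ := d0 - Finsupp.single (Fin.last n) 1 with hE
  intro h
  have hco := congrArg (coeff (Finsupp.single t.castSucc 1 + E)) h
  rw [rho_xiP_apply] at hco
  rw [coeff_sum] at hco
  have hterm : ∀ j : Fin n,
      coeff (Finsupp.single t.castSucc 1 + E)
        (v j • (X j.castSucc * pderiv (Fin.last n) (monomial d0 1)))
      = if j = t then v t * ((m - k : ℕ) : ℂ) else 0 := by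
    intro j
    rw [pderiv_monomial, X_mul_monomial', coeff_smul, coeff_monomial, hL]
    by_cases hjt : j = t
    · subst hjt
      rw [if_pos rfl, if_pos rfl]
      simp
    · rw [if_neg hjt, if_neg, smul_zero]
      intro heq
      have := add_right_cancel heq
      exact hjt (Fin.castSucc_injective n
        (Finsupp.single_left_injective one_ne_zero this))
  rw [Finset.sum_congr rfl (fun j _ => hterm j), Finset.sum_ite_eq' Finset.univ t,
    if_pos (Finset.mem_univ t)] at hco
  simp only [coeff_zero] at hco
  have : ((m - k : ℕ) : ℂ) ≠ 0 := by
    simp only [ne_eq, Nat.cast_eq_zero]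
    omega
  exact this (by
    have := mul_eq_zero.mp hco
    tauto)

lemma rho_xiM_ne_zero (n m k : ℕ) (hk : 1 ≤ k) (hk' : k ≤ m - 1) (hm : 2 ≤ m)
    (v : Fin n → ℂ) (t : Fin n) (ht : v t ≠ 0) :
    rho n (xiM n v)
      (monomial (Finsupp.single t.castSucc k + Finsupp.single (Fin.last n) (m - k)) 1) ≠ 0 := by
  set d0 : Fin (n+1) →₀ ℕ :=
    Finsupp.single t.castSucc k + Finsupp.single (Fin.last n) (m - k) with hd0
  obtain ⟨hL, hT⟩ := d0_spec n m k t
  rw [rho_xiM_apply]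
  have hterm : ∀ i : Fin n, i ≠ t →
      (starRingEnd ℂ) (v i) •
        ((X (Fin.last n) : MvPolynomial (Fin (n+1)) ℂ) *
          pderiv i.castSucc (monomial d0 (1 : ℂ))) = 0 := by
    intro i hit
    have hzi : d0 i.castSucc = 0 := by
      rw [hd0, Finsupp.add_apply, Finsupp.single_apply, Finsupp.single_apply,
        if_neg (fun he => hit (Fin.castSucc_injective n he.symm)),
        if_neg (Fin.castSucc_lt_last i).ne', add_zero]
    rw [pderiv_monomial, hzi]
    simp
  rw [Finset.sum_eq_single t (fun i _ hit => hterm i hit) (fun h => absurd (Finset.mem_univ t) h)]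
  rw [pderiv_monomial, X_mul_monomial', hT]
  apply smul_ne_zero
  · simpa using ht
  · rw [ne_eq, monomial_eq_zero]
    simp only [one_mul, Nat.cast_eq_zero]
    omega
/-- For `1 ≤ k ≤ m-1`: `ρ_m(ξ_v⁺)` maps `W_k` to `W_{k+1}`, `ρ_m(ξ_v⁻)` maps `W_k`
to `W_{k-1}`, hence `ρ_m(ξ_v)` maps `W_k` into `W_{k-1} ⊕ W_{k+1}`; moreover for
`v ≠ 0` both restrictions are nonzero. -/
theorem rho_mapsTo_Wcomp (n m k : ℕ) (hm : 2 ≤ m) (hk : 1 ≤ k) (hk' : k ≤ m - 1) :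
    (∀ (v : Fin n → ℂ) (w : MvPolynomial (Fin (n+1)) ℂ),
        w ∈ Wcomp n m k → rho n (xiP n v) w ∈ Wcomp n m (k + 1))
    ∧ (∀ (v : Fin n → ℂ) (w : MvPolynomial (Fin (n+1)) ℂ),
        w ∈ Wcomp n m k → rho n (xiM n v) w ∈ Wcomp n m (k - 1))
    ∧ (∀ (v : Fin n → ℂ) (w : MvPolynomial (Fin (n+1)) ℂ),
        w ∈ Wcomp n m k → rho n (xi n v) w ∈ Wcomp n m (k - 1) ⊔ Wcomp n m (k + 1))
    ∧ (∀ v : Fin n → ℂ, v ≠ 0 →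
        (∃ w ∈ Wcomp n m k, rho n (xiP n v) w ≠ 0)
        ∧ (∃ w ∈ Wcomp n m k, rho n (xiM n v) w ≠ 0)) := by
  have hP : ∀ (v : Fin n → ℂ) (w : MvPolynomial (Fin (n+1)) ℂ),
      w ∈ Wcomp n m k → rho n (xiP n v) w ∈ Wcomp n m (k + 1) := by
    intro v
    apply rho_mem_of_span
    rintro s ⟨d, h1, h2, rfl⟩
    exact rho_xiP_monomial_mem n m k (by omega) v d h1 h2
  have hM : ∀ (v : Fin n → ℂ) (w : MvPolynomial (Fin (n+1)) ℂ),
      w ∈ Wcomp n m k → rho n (xiM n v) w ∈ Wcomp n m (k - 1) := by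
    intro v
    apply rho_mem_of_span
    rintro s ⟨d, h1, h2, rfl⟩
    exact rho_xiM_monomial_mem n m k hk (by omega) v d h1 h2
  refine ⟨hP, hM, ?_, ?_⟩
  · intro v w hw
    rw [xi, rho_add, LinearMap.add_apply]
    exact add_mem (Submodule.mem_sup_right (hP v w hw)) (Submodule.mem_sup_left (hM v w hw))
  · intro v hv
    obtain ⟨t, ht⟩ := Function.ne_iff.mp hv
    have hmem : (monomial (Finsupp.single t.castSucc k + Finsupp.single (Fin.last n) (m - k)) 1 :
        MvPolynomial (Fin (n+1)) ℂ) ∈ Wcomp n m k := by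
      obtain ⟨hL, hT⟩ := d0_spec n m k t
      apply mem_Wcomp n m k _ 1 _ hL
      rw [sum_univ_add, sum_univ_single, sum_univ_single]
      omega
    exact ⟨⟨_, hmem, rho_xiP_ne_zero n m k hk hk' hm v t ht⟩,
      ⟨_, hmem, rho_xiM_ne_zero n m k hk hk' hm v t ht⟩⟩

end
end

section
/- Let m ≥ 2 and 1 ≤ k ≤ m−1. If w ∈ W_k satisfies ρ_m(ξ_v^+)w = 0 for all v ∈ ℂⁿ, then w = 0. Likewise, if w ∈ W_k satisfies ρ_m(ξ_v^-)w = 0 for all v ∈ ℂⁿ, then w = 0. -/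
open MvPolynomial

noncomputable section

/- ######### auxiliary lemmas ######### -/

lemma aux_finsupp_sub_add {n : ℕ} (d : Fin (n+1) →₀ ℕ) (i : Fin (n+1)) (h : 1 ≤ d i) :
    d - Finsupp.single i 1 + Finsupp.single i 1 = d := by
  ext j
  rcases eq_or_ne j i with rfl | hj
  · simp [Finsupp.tsub_apply]; omega
  · simp [Finsupp.tsub_apply, Finsupp.single_eq_of_ne' (Ne.symm hj)]

lemma aux_coeff_pderiv {n : ℕ} (i : Fin (n+1)) (d : Fin (n+1) →₀ ℕ)
    (p : MvPolynomial (Fin (n+1)) ℂ) :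
    coeff d (pderiv i p) = ((d i + 1 : ℕ) : ℂ) * coeff (d + Finsupp.single i 1) p := by
  induction p using MvPolynomial.induction_on' with
  | monomial s a =>
    rw [pderiv_monomial, coeff_monomial, coeff_monomial]
    by_cases h : s = d + Finsupp.single i 1
    · subst h
      have h1 : d + Finsupp.single i 1 - Finsupp.single i 1 = d := by
        ext j
        rcases eq_or_ne j i with rfl | hj
        · simp [Finsupp.tsub_apply]
        · simp [Finsupp.tsub_apply, Finsupp.single_eq_of_ne' (Ne.symm hj)]
      have h2 : ((d + Finsupp.single i 1 : Fin (n+1) →₀ ℕ)) i = d i + 1 := by simp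
      rw [if_pos h1, if_pos rfl, h2]
      push_cast; ring
    · rw [if_neg h]
      by_cases h0 : s i = 0
      · have hs : s - Finsupp.single i 1 = s := by
          ext j
          rcases eq_or_ne j i with rfl | hj
          · simp [Finsupp.tsub_apply, h0]
          · simp [Finsupp.tsub_apply, Finsupp.single_eq_of_ne' (Ne.symm hj)]
        rw [hs, h0]
        simp
      · have : s - Finsupp.single i 1 ≠ d := by
          intro hc
          apply h
          rw [← hc]
          ext j
          rcases eq_or_ne j i with rfl | hj
          · simp [Finsupp.tsub_apply]; omega
          · simp [Finsupp.tsub_apply, Finsupp.single_eq_of_ne' (Ne.symm hj)]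
        simp [if_neg this]
  | add p q hp hq =>
    simp [hp, hq, mul_add]

lemma aux_support (n m k : ℕ) (w : MvPolynomial (Fin (n+1)) ℂ) (hw : w ∈ Wcomp n m k)
    (d : Fin (n+1) →₀ ℕ) (hd : coeff d w ≠ 0) :
    (∑ i, d i) = m ∧ d (Fin.last n) = m - k := by
  induction hw using Submodule.span_induction with
  | mem x hx =>
    obtain ⟨e, he1, he2, rfl⟩ := hx
    rw [coeff_monomial] at hd
    split at hd
    · rename_i h; subst h; exact ⟨he1, he2⟩
    · exact absurd rfl hd
  | zero => simp at hd
  | add x y hx hy ihx ihy =>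
    rw [coeff_add] at hd
    rcases (by by_contra hc; push_neg at hc; rw [hc.1, hc.2, add_zero] at hd; exact hd rfl :
        coeff d x ≠ 0 ∨ coeff d y ≠ 0) with h | h
    · exact ihx h
    · exact ihy h
  | smul a x hx ihx =>
    rw [coeff_smul] at hd
    exact ihx (right_ne_zero_of_mul hd)

lemma aux_rho_apply (n : ℕ) (M : Matrix (Fin (n+1)) (Fin (n+1)) ℂ)
    (w : MvPolynomial (Fin (n+1)) ℂ) :
    rho n M w = ∑ i, ∑ j, M j i • (X j * pderiv i w) := by
  simp [rho, LinearMap.sum_apply, LinearMap.smul_apply, LinearMap.comp_apply,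
    LinearMap.mulLeft_apply]

lemma aux_rhoP (n : ℕ) (j : Fin n) (w : MvPolynomial (Fin (n+1)) ℂ) :
    rho n (xiP n (Pi.single j 1)) w = X (Fin.castSucc j) * pderiv (Fin.last n) w := by
  rw [aux_rho_apply]
  rw [Finset.sum_eq_single (Fin.last n)]
  · rw [Finset.sum_eq_single (Fin.castSucc j)]
    · have hc : ((Fin.castSucc j : Fin (n+1)) : ℕ) < n ∧ Fin.last n = Fin.last n :=
        ⟨j.isLt, rfl⟩
      have : xiP n (Pi.single j 1) (Fin.castSucc j) (Fin.last n) = 1 := by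
        rw [xiP, Matrix.of_apply, dif_pos hc]
        have hj : (⟨((Fin.castSucc j : Fin (n+1)) : ℕ), hc.1⟩ : Fin n) = j := by
          apply Fin.ext; simp
        rw [hj, Pi.single_eq_same]
      rw [this, one_smul]
    · intro b _ hb
      have : xiP n (Pi.single j 1) b (Fin.last n) = 0 := by
        rw [xiP, Matrix.of_apply]
        by_cases hb' : (b : ℕ) < n
        · rw [dif_pos ⟨hb', rfl⟩]
          apply Pi.single_eq_of_ne
          intro hcon
          apply hb
          apply Fin.ext
          simpa using congrArg Fin.val hcon
        · rw [dif_neg (by tauto)]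
      rw [this, zero_smul]
    · intro h; exact absurd (Finset.mem_univ _) h
  · intro b _ hb
    apply Finset.sum_eq_zero
    intro j' _
    have : xiP n (Pi.single j 1) j' b = 0 := by
      rw [xiP, Matrix.of_apply, dif_neg (by tauto)]
    rw [this, zero_smul]
  · intro h; exact absurd (Finset.mem_univ _) h

lemma aux_rhoM (n : ℕ) (i0 : Fin n) (w : MvPolynomial (Fin (n+1)) ℂ) :
    rho n (xiM n (Pi.single i0 1)) w = X (Fin.last n) * pderiv (Fin.castSucc i0) w := by
  rw [aux_rho_apply]
  rw [Finset.sum_eq_single (Fin.castSucc i0)]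
  · rw [Finset.sum_eq_single (Fin.last n)]
    · have hc : Fin.last n = Fin.last n ∧ ((Fin.castSucc i0 : Fin (n+1)) : ℕ) < n :=
        ⟨rfl, i0.isLt⟩
      have : xiM n (Pi.single i0 1) (Fin.last n) (Fin.castSucc i0) = 1 := by
        rw [xiM, Matrix.of_apply, dif_pos hc]
        have hj : (⟨((Fin.castSucc i0 : Fin (n+1)) : ℕ), hc.2⟩ : Fin n) = i0 := by
          apply Fin.ext; simp
        rw [hj, Pi.single_eq_same, map_one]
      rw [this, one_smul]
    · intro b _ hb
      have : xiM n (Pi.single i0 1) b (Fin.castSucc i0) = 0 := by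
        rw [xiM, Matrix.of_apply, dif_neg (by tauto)]
      rw [this, zero_smul]
    · intro h; exact absurd (Finset.mem_univ _) h
  · intro b _ hb
    apply Finset.sum_eq_zero
    intro j' _
    have : xiM n (Pi.single i0 1) j' b = 0 := by
      rw [xiM, Matrix.of_apply]
      by_cases hj' : j' = Fin.last n
      · subst hj'
        by_cases hb' : (b : ℕ) < n
        · rw [dif_pos ⟨rfl, hb'⟩]
          have h0 : (Pi.single i0 (1:ℂ) : Fin n → ℂ) ⟨(b : ℕ), hb'⟩ = 0 := by
            apply Pi.single_eq_of_ne
            intro hcon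
            apply hb
            apply Fin.ext
            simpa using congrArg Fin.val hcon
          rw [h0, map_zero]
        · rw [dif_neg (by tauto)]
      · rw [dif_neg (by tauto)]
    rw [this, zero_smul]
  · intro h; exact absurd (Finset.mem_univ _) h

/-- The whole polynomial vanishes given that a suitable partial derivative vanishes. -/
lemma aux_zero_of_pderiv (n m k : ℕ) (w : MvPolynomial (Fin (n+1)) ℂ)
    (hw : w ∈ Wcomp n m k)
    (H : ∀ d : Fin (n+1) →₀ ℕ, (∑ i, d i) = m → d (Fin.last n) = m - k →
      ∃ i : Fin (n+1), 1 ≤ d i ∧ pderiv i w = 0) : w = 0 := by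
  apply MvPolynomial.ext
  intro d
  rw [coeff_zero]
  by_contra hd
  obtain ⟨h1, h2⟩ := aux_support n m k w hw d hd
  obtain ⟨i, hi1, hi2⟩ := H d h1 h2
  have hc := aux_coeff_pderiv i (d - Finsupp.single i 1) w
  rw [hi2, coeff_zero, aux_finsupp_sub_add d i hi1] at hc
  have hne : (((d - Finsupp.single i 1 : Fin (n+1) →₀ ℕ)) i + 1 : ℕ) ≠ 0 := Nat.succ_ne_zero _
  rcases mul_eq_zero.mp hc.symm with h | h
  · exact absurd h (Nat.cast_ne_zero.mpr hne)
  · exact hd h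

/-- For `1 ≤ k ≤ m-1`: if `w ∈ W_k` is killed by all `ρ_m(ξ_v⁺)` (resp. all
`ρ_m(ξ_v⁻)`) then `w = 0`. -/
theorem rho_killed_eq_zero (n m k : ℕ) (hm : 2 ≤ m) (hk : 1 ≤ k) (hk' : k ≤ m - 1)
    (w : MvPolynomial (Fin (n+1)) ℂ) (hw : w ∈ Wcomp n m k) :
    ((∀ v : Fin n → ℂ, rho n (xiP n v) w = 0) → w = 0)
    ∧ ((∀ v : Fin n → ℂ, rho n (xiM n v) w = 0) → w = 0) := by
  rcases Nat.eq_zero_or_pos n with rfl | hn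
  · have hw0 : w = 0 := by
      apply MvPolynomial.ext
      intro d
      rw [coeff_zero]
      by_contra hd
      obtain ⟨h1, h2⟩ := aux_support 0 m k w hw d hd
      rw [Fin.sum_univ_one] at h1
      have heq : d 0 = d (Fin.last 0) := by congr 1
      omega
    exact ⟨fun _ => hw0, fun _ => hw0⟩
  constructor
  · intro hv
    have hD : pderiv (Fin.last n) w = 0 := by
      have h := hv (Pi.single (⟨0, hn⟩ : Fin n) 1)
      rw [aux_rhoP] at h
      rcases mul_eq_zero.mp h with h' | h'
      · exact absurd h' (MvPolynomial.X_ne_zero _)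
      · exact h'
    apply aux_zero_of_pderiv n m k w hw
    intro d h1 h2
    exact ⟨Fin.last n, by omega, hD⟩
  · intro hv
    apply aux_zero_of_pderiv n m k w hw
    intro d h1 h2
    have hsum : ∑ i0 : Fin n, d (Fin.castSucc i0) = k := by
      rw [Fin.sum_univ_castSucc] at h1
      omega
    have hex : ∃ i0 : Fin n, 1 ≤ d (Fin.castSucc i0) := by
      by_contra hcon
      push_neg at hcon
      have hz : ∑ i0 : Fin n, d (Fin.castSucc i0) = 0 :=
        Finset.sum_eq_zero (fun i _ => by have := hcon i; omega)
      omega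
    obtain ⟨i0, hi0⟩ := hex
    refine ⟨Fin.castSucc i0, hi0, ?_⟩
    have h := hv (Pi.single i0 1)
    rw [aux_rhoM] at h
    rcases mul_eq_zero.mp h with h' | h'
    · exact absurd h' (MvPolynomial.X_ne_zero _)
    · exact h'

end
end

section
/- Let m ≥ 1 and let β : ℂⁿ → S^m(V_1') be a ℂ-linear map (identifying 𝔭^+ with ℂⁿ via ξ_v^+ ↦ v) taking values in the symmetric m-linear forms on V vanishing whenever some argument equals e_{n+1}. If ρ_m'(ξ_u^+)β(v) = ρ_m'(ξ_v^+)β(u) for all u, v ∈ ℂⁿ, then the (m+1)-linear form (u, v_1, …, v_m) ↦ β(u)(v_1, …, v_m) on V_1 is symmetric in all m+1 variables. -/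
open MvPolynomial

noncomputable section

lemma rhoDual_apply (n m : ℕ) (M : Matrix (Fin (n+1)) (Fin (n+1)) ℂ)
    (φ : MultilinearMap ℂ (fun _ : Fin m => (Fin (n+1) → ℂ)) ℂ)
    (x : Fin m → Fin (n+1) → ℂ) :
    rhoDual n m M φ x = -∑ i : Fin m, φ (Function.update x i (Matrix.toLin' M (x i))) := by
  simp only [rhoDual, MultilinearMap.neg_apply, MultilinearMap.sum_apply,
    MultilinearMap.compLinearMap_apply]
  congr 1
  refine Finset.sum_congr rfl fun i _ => ?_
  congr 1
  funext j
  rcases eq_or_ne j i with rfl | h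
  · simp
  · simp [Function.update_of_ne h]

lemma xiP_toLin (n : ℕ) (u : Fin n → ℂ) (z : Fin (n+1) → ℂ) :
    Matrix.toLin' (xiP n u) z = z (Fin.last n) • (Fin.snoc u 0 : Fin (n+1) → ℂ) := by
  funext k
  rw [Matrix.toLin'_apply]
  induction k using Fin.lastCases with
  | last =>
    simp [Matrix.mulVec, dotProduct, xiP]
  | cast p =>
    have hp : ((p.castSucc : Fin (n+1)) : ℕ) < n := p.is_lt
    simp only [Matrix.mulVec, dotProduct, xiP, Matrix.of_apply, Pi.smul_apply,
      Fin.snoc_castSucc, smul_eq_mul]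
    rw [Finset.sum_eq_single (Fin.last n)]
    · simp [hp, mul_comm]
    · intro b _ hb
      simp [hb]
    · simp

lemma key_lemma (n m : ℕ) (hm : 1 ≤ m)
    (β : (Fin n → ℂ) → MultilinearMap ℂ (fun _ : Fin m => (Fin (n+1) → ℂ)) ℂ)
    (hsym : ∀ u v, rhoDual n m (xiP n u) (β v) = rhoDual n m (xiP n v) (β u))
    (u v : Fin n → ℂ) (w : Fin m → Fin (n+1) → ℂ)
    (hw : ∀ i, w i (Fin.last n) = 0) :
    β v (Function.update w ⟨0, hm⟩ (Fin.snoc u 0)) =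
      β u (Function.update w ⟨0, hm⟩ (Fin.snoc v 0)) := by
  set z0 : Fin m := ⟨0, hm⟩ with hz0
  set x := Function.update w z0 (Pi.single (Fin.last n) (1:ℂ)) with hx
  have comp : ∀ (a : Fin n → ℂ) (φ : MultilinearMap ℂ (fun _ : Fin m => (Fin (n+1) → ℂ)) ℂ),
      (∑ i : Fin m, φ (Function.update x i (Matrix.toLin' (xiP n a) (x i))))
        = φ (Function.update w z0 (Fin.snoc a 0)) := by
    intro a φ
    rw [Finset.sum_eq_single z0]
    · have h1 : x z0 = Pi.single (Fin.last n) (1:ℂ) := Function.update_self _ _ _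
      rw [h1, xiP_toLin]
      rw [Pi.single_eq_same, one_smul, hx, Function.update_idem]
    · intro i _ hi
      have hxi : x i = w i := Function.update_of_ne hi _ _
      rw [hxi, xiP_toLin, hw i, zero_smul]
      exact φ.map_coord_zero i (Function.update_self _ _ _)
    · simp
  have H := DFunLike.congr_fun (hsym u v) x
  rw [rhoDual_apply, rhoDual_apply, comp u (β v), comp v (β u)] at H
  exact neg_injective H

lemma succ_swap {m : ℕ} (j k i : Fin m) :
    Equiv.swap j.succ k.succ i.succ = (Equiv.swap j k i).succ := by
  rcases eq_or_ne i j with rfl | hij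
  · simp [Equiv.swap_apply_left]
  rcases eq_or_ne i k with rfl | hik
  · simp [Equiv.swap_apply_right]
  rw [Equiv.swap_apply_of_ne_of_ne hij hik,
    Equiv.swap_apply_of_ne_of_ne (fun h => hij (Fin.succ_injective _ h))
      (fun h => hik (Fin.succ_injective _ h))]

/-- If `β : ℂⁿ → S^m(V_1')` is ℂ-linear with values in the symmetric `m`-linear
forms vanishing on `e_{n+1}`, and `ρ_m'(ξ_u⁺)β(v) = ρ_m'(ξ_v⁺)β(u)` for all
`u, v`, then the `(m+1)`-linear form `(u, v_1, …, v_m) ↦ β(u)(v_1, …, v_m)` on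
`V_1` is symmetric in all `m+1` variables. -/
theorem symmetric_in_all_variables (n m : ℕ) (hm : 1 ≤ m)
    (β : (Fin n → ℂ) → MultilinearMap ℂ (fun _ : Fin m => (Fin (n+1) → ℂ)) ℂ)
    (hadd : ∀ u v, β (u + v) = β u + β v)
    (hsmul : ∀ (c : ℂ) (v : Fin n → ℂ), β (c • v) = c • β v)
    (hsymval : ∀ v (σ : Equiv.Perm (Fin m)) (x : Fin m → Fin (n+1) → ℂ),
        β v (x ∘ σ) = β v x)
    (hvanish : ∀ v (x : Fin m → Fin (n+1) → ℂ) (i : Fin m),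
        x i = Pi.single (Fin.last n) (1 : ℂ) → β v x = 0)
    (hsym : ∀ u v, rhoDual n m (xiP n u) (β v) = rhoDual n m (xiP n v) (β u)) :
    ∀ (σ : Equiv.Perm (Fin (m+1))) (y : Fin (m+1) → Fin n → ℂ),
      β (y (σ 0)) (fun i => Fin.snoc (y (σ i.succ)) 0)
        = β (y 0) (fun i => Fin.snoc (y i.succ) 0) := by
  -- invariance under swapping position 0 with a successor position
  have swapA : ∀ (k : Fin m) (y : Fin (m+1) → Fin n → ℂ),
      β ((y ∘ Equiv.swap 0 k.succ) 0)
          (fun i => Fin.snoc ((y ∘ Equiv.swap 0 k.succ) i.succ) 0)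
        = β (y 0) (fun i => Fin.snoc (y i.succ) 0) := by
    intro k y
    set s : Equiv.Perm (Fin (m+1)) := Equiv.swap 0 k.succ with hs
    set z0 : Fin m := ⟨0, hm⟩ with hz0
    set t : Equiv.Perm (Fin m) := Equiv.swap z0 k with ht
    set xx : Fin m → Fin (n+1) → ℂ := fun i => Fin.snoc (y i.succ) 0 with hxx
    set w : Fin m → Fin (n+1) → ℂ := xx ∘ t with hw'
    have hw : ∀ i, w i (Fin.last n) = 0 := by
      intro i; simp [hw', hxx]
    have hwz0 : w z0 = Fin.snoc (y k.succ) 0 := by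
      simp [hw', hxx, ht, Equiv.swap_apply_left]
    have hy0 : (y ∘ s) 0 = y k.succ := by
      simp [hs, Equiv.swap_apply_left]
    have hkey := key_lemma n m hm β hsym (y k.succ) (y 0) w hw
    have lhs_eq : (fun i => Fin.snoc ((y ∘ s) i.succ) 0 : Fin m → Fin (n+1) → ℂ) ∘ t
        = Function.update w z0 (Fin.snoc (y 0) 0) := by
      funext i
      rcases eq_or_ne i z0 with rfl | hi
      · simp only [Function.comp_apply, Function.update_self, ht, Equiv.swap_apply_left]
        simp [hs, Equiv.swap_apply_right]
      · rw [Function.update_of_ne hi]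
        simp only [Function.comp_apply, hw', hxx]
        congr 1
        have hti : t i ≠ k := by
          intro h
          exact hi (t.injective (h.trans (Equiv.swap_apply_left z0 k).symm))
        rw [hs, Equiv.swap_apply_of_ne_of_ne (Fin.succ_ne_zero _)
          (fun h => hti (Fin.succ_injective _ h))]
    calc β ((y ∘ s) 0) (fun i => Fin.snoc ((y ∘ s) i.succ) 0)
        = β (y k.succ) ((fun i => Fin.snoc ((y ∘ s) i.succ) 0) ∘ t) := by
          rw [hy0, hsymval]
      _ = β (y k.succ) (Function.update w z0 (Fin.snoc (y 0) 0)) := by rw [lhs_eq]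
      _ = β (y 0) (Function.update w z0 (Fin.snoc (y k.succ) 0)) := hkey.symm
      _ = β (y 0) w := by rw [← hwz0, Function.update_eq_self]
      _ = β (y 0) xx := by rw [hw', hsymval]
  -- invariance under swapping two successor positions
  have swapC : ∀ (j k : Fin m) (y : Fin (m+1) → Fin n → ℂ),
      β ((y ∘ Equiv.swap j.succ k.succ) 0)
          (fun i => Fin.snoc ((y ∘ Equiv.swap j.succ k.succ) i.succ) 0)
        = β (y 0) (fun i => Fin.snoc (y i.succ) 0) := by
    intro j k y
    have h0 : Equiv.swap j.succ k.succ (0 : Fin (m+1)) = 0 :=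
      Equiv.swap_apply_of_ne_of_ne (Fin.succ_ne_zero j).symm (Fin.succ_ne_zero k).symm
    have hargs : (fun i => Fin.snoc (y (Equiv.swap j.succ k.succ i.succ)) 0
          : Fin m → Fin (n+1) → ℂ)
        = (fun i => Fin.snoc (y i.succ) 0) ∘ (Equiv.swap j k) := by
      funext i
      simp only [Function.comp_apply, succ_swap]
    show β (y (Equiv.swap j.succ k.succ 0)) (fun i => Fin.snoc (y (Equiv.swap j.succ k.succ i.succ)) 0)
        = β (y 0) (fun i => Fin.snoc (y i.succ) 0)
    rw [h0, hargs]
    exact hsymval (y 0) (Equiv.swap j k) _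
  -- any transposition
  have swapAll : ∀ (a b : Fin (m+1)), a ≠ b → ∀ (y : Fin (m+1) → Fin n → ℂ),
      β ((y ∘ Equiv.swap a b) 0) (fun i => Fin.snoc ((y ∘ Equiv.swap a b) i.succ) 0)
        = β (y 0) (fun i => Fin.snoc (y i.succ) 0) := by
    intro a b hab y
    induction a using Fin.cases with
    | zero =>
      induction b using Fin.cases with
      | zero => exact absurd rfl hab
      | succ k => exact swapA k y
    | succ j =>
      induction b using Fin.cases with
      | zero => rw [Equiv.swap_comm]; exact swapA j y
      | succ k => exact swapC j k y
  -- main induction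
  have main : ∀ (σ : Equiv.Perm (Fin (m+1))) (y : Fin (m+1) → Fin n → ℂ),
      β ((y ∘ σ) 0) (fun i => Fin.snoc ((y ∘ σ) i.succ) 0)
        = β (y 0) (fun i => Fin.snoc (y i.succ) 0) := by
    intro σ
    refine Equiv.Perm.swap_induction_on σ (fun y => rfl) ?_
    intro f a b hab ih y
    have step : y ∘ ⇑(Equiv.swap a b * f) = (y ∘ ⇑(Equiv.swap a b)) ∘ ⇑f := rfl
    rw [step, ih (y ∘ ⇑(Equiv.swap a b)), swapAll a b hab y]
  intro σ y
  exact main σ y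


end
end

section
/- Let m ≥ 1 and 1 ≤ j ≤ m. Let β : 𝔭 → W_j be conjugate-ℂ-linear, i.e. β(ξ_{iv}) = −i·β(ξ_v) for all v ∈ ℂⁿ, so that β(ξ_v) = Σ_{i=1}^n v̄_i β(ξ_{e_i}). If ρ_m(ξ_u^-)β(ξ_v) = ρ_m(ξ_v^-)β(ξ_u) for all u, v ∈ ℂⁿ, then the tensor Σ_{i=1}^n e_i ⊗ β_i ∈ V_1 ⊗ S^j(V_1), where β(ξ_{e_i}) = β_i · e_{n+1}^{m−j} with β_i ∈ S^j(V_1), lies in the image of the natural embedding S^{j+1}(V_1) ↪ V_1 ⊗ S^j(V_1), i.e. it is a symmetric tensor. -/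
open MvPolynomial

noncomputable section

lemma degree_eq_sum {N : ℕ} (d : Fin N →₀ ℕ) : d.degree = ∑ i, d i := by
  rw [Finsupp.degree]
  exact Finset.sum_subset (Finset.subset_univ _) (by
    intro x _ hx
    simpa using Finsupp.notMem_support_iff.mp hx)

lemma X_mul_pderiv_monomial {N : ℕ} (i : Fin N) (d : Fin N →₀ ℕ) (c : ℂ) :
    X i * pderiv i (monomial d c) = C (d i : ℂ) * monomial d c := by
  rw [pderiv_monomial]
  by_cases h : d i = 0
  · simp [h]
  · rw [X, monomial_mul, C_mul_monomial, one_mul]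
    congr 1
    · rw [add_tsub_cancel_of_le]
      exact Finsupp.single_le_iff.mpr (Nat.one_le_iff_ne_zero.mpr h)
    · ring

lemma euler {N k : ℕ} {p : MvPolynomial (Fin N) ℂ} (hp : p.IsHomogeneous k) :
    ∑ i, X i * pderiv i p = C (k : ℂ) * p := by
  conv_lhs => rw [p.as_sum]
  simp_rw [map_sum, Finset.mul_sum]
  rw [Finset.sum_comm]
  conv_rhs => rw [p.as_sum, Finset.mul_sum]
  refine Finset.sum_congr rfl fun d hd => ?_
  have hdeg : ∑ i, d i = k := by
    rw [← degree_eq_sum, Finsupp.degree_eq_weight_one]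
    exact hp (mem_support_iff.mp hd)
  calc ∑ i, X i * pderiv i (monomial d (coeff d p))
      = ∑ i, C (d i : ℂ) * monomial d (coeff d p) :=
        Finset.sum_congr rfl fun i _ => X_mul_pderiv_monomial i d _
    _ = C (k : ℂ) * monomial d (coeff d p) := by
        rw [← Finset.sum_mul, ← map_sum, ← Nat.cast_sum, hdeg]

lemma wcomp_struct {n m k : ℕ} (hk : k ≤ m) {p : MvPolynomial (Fin (n+1)) ℂ}
    (hp : p ∈ Wcomp n m k) :
    ∃ q : MvPolynomial (Fin (n+1)) ℂ, q.IsHomogeneous k ∧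
      (∀ d ∈ q.support, d (Fin.last n) = 0) ∧ p = q * X (Fin.last n) ^ (m - k) := by
  induction hp using Submodule.span_induction with
  | mem x hx =>
    obtain ⟨d, hsum, hlast, rfl⟩ := hx
    refine ⟨monomial (d.erase (Fin.last n)) 1, ?_, ?_, ?_⟩
    · refine isHomogeneous_monomial _ ?_
      rw [degree_eq_sum]
      have h1 : ∑ i, d.erase (Fin.last n) i
          = ∑ i : Fin n, d (Fin.castSucc i) := by
        rw [Fin.sum_univ_castSucc]
        simp only [Finsupp.erase_same, add_zero]
        refine Finset.sum_congr rfl fun i _ => Finsupp.erase_ne (Fin.castSucc_lt_last i).ne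
      have h2 : (∑ i : Fin n, d (Fin.castSucc i)) + (m - k) = m := by
        rw [← hlast, ← Fin.sum_univ_castSucc, hsum]
      omega
    · intro e he
      simp only [support_monomial, one_ne_zero, if_false, Finset.mem_singleton] at he
      subst he
      exact Finsupp.erase_same
    · have hds : d.erase (Fin.last n) + Finsupp.single (Fin.last n) (m - k) = d := by
        rw [← hlast]
        exact Finsupp.erase_add_single _ _
      rw [X_pow_eq_monomial, monomial_mul, mul_one, hds]
  | zero => exact ⟨0, isHomogeneous_zero _ _ _, by simp, by simp⟩
  | add x y _ _ hx hy =>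
    obtain ⟨q1, h1, s1, e1⟩ := hx
    obtain ⟨q2, h2, s2, e2⟩ := hy
    refine ⟨q1 + q2, h1.add h2, ?_, by rw [e1, e2, add_mul]⟩
    intro d hd
    rcases Finset.mem_union.mp (MvPolynomial.support_add hd) with h | h
    · exact s1 d h
    · exact s2 d h
  | smul c x _ hx =>
    obtain ⟨q, h1, s1, e1⟩ := hx
    refine ⟨c • q, ?_, ?_, by rw [e1, smul_mul_assoc]⟩
    · intro d hd
      refine h1 fun hc => hd ?_
      rw [coeff_smul, hc, smul_zero]
    · intro d hd
      exact s1 d (Finsupp.support_smul hd)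

lemma rho_xiM_single (n : ℕ) (a : Fin n) (p : MvPolynomial (Fin (n+1)) ℂ) :
    rho n (xiM n (Pi.single a 1)) p = X (Fin.last n) * pderiv (Fin.castSucc a) p := by
  rw [rho]
  simp only [LinearMap.sum_apply, LinearMap.smul_apply, LinearMap.comp_apply,
    LinearMap.mulLeft_apply, Derivation.coeFn_coe]
  rw [Finset.sum_eq_single (Fin.castSucc a)]
  · rw [Finset.sum_eq_single (Fin.last n)]
    · have h1 : xiM n (Pi.single a 1) (Fin.last n) (Fin.castSucc a) = 1 := by
        rw [xiM]
        simp only [Matrix.of_apply]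
        rw [dif_pos ⟨trivial, a.isLt⟩]
        simp [Fin.eta]
      rw [h1, one_smul]
    · intro b _ hb
      have h1 : xiM n (Pi.single a 1) b (Fin.castSucc a) = 0 := by
        rw [xiM]; simp only [Matrix.of_apply]
        rw [dif_neg]; tauto
      rw [h1, zero_smul]
    · simp
  · intro i _ hi
    refine Finset.sum_eq_zero fun b _ => ?_
    have h1 : xiM n (Pi.single a 1) b i = 0 := by
      rw [xiM]; simp only [Matrix.of_apply]
      by_cases h : b = Fin.last n ∧ (i : ℕ) < n
      · rw [dif_pos h]
        have hne : (⟨(i : ℕ), h.2⟩ : Fin n) ≠ a := by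
          intro hcontra
          apply hi
          rw [← hcontra]
          ext; simp
        rw [Pi.single_eq_of_ne hne]
        simp
      · rw [dif_neg h]
    rw [h1, zero_smul]
  · simp

/-- If `β : 𝔭 → W_j` is conjugate-ℂ-linear and `ρ_m(ξ_u⁻)β(ξ_v) = ρ_m(ξ_v⁻)β(ξ_u)`
for all `u, v`, then the tensor `Σ e_i ⊗ β_i ∈ V_1 ⊗ S^j(V_1)` (where
`β(ξ_{e_i}) = β_i · e_{n+1}^{m-j}`) is symmetric, i.e. lies in the image of
`S^{j+1}(V_1) ↪ V_1 ⊗ S^j(V_1)`; in the polynomial model this means there is a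
homogeneous `g` of degree `j+1` in the first `n` variables with
`(j+1)·β_i = ∂_i g` for all `i`. -/
theorem symmetric_relation_implies_symmetric_tensor (n m j : ℕ)
    (hm : 1 ≤ m) (hj : 1 ≤ j) (hjm : j ≤ m)
    (β : (Fin n → ℂ) → MvPolynomial (Fin (n+1)) ℂ)
    (hadd : ∀ u v, β (u + v) = β u + β v)
    (hconj : ∀ (c : ℂ) (v : Fin n → ℂ), β (c • v) = (starRingEnd ℂ) c • β v)
    (hWj : ∀ v, β v ∈ Wcomp n m j)
    (hsym : ∀ u v, rho n (xiM n u) (β v) = rho n (xiM n v) (β u)) :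
    ∃ g : MvPolynomial (Fin (n+1)) ℂ, g.IsHomogeneous (j + 1) ∧
      (∀ d ∈ g.support, d (Fin.last n) = 0) ∧
      (∀ i : Fin n, ((j : ℂ) + 1) • β (Pi.single i 1)
        = pderiv (Fin.castSucc i) g * X (Fin.last n) ^ (m - j)) := by
  have hq : ∀ i : Fin n, ∃ q : MvPolynomial (Fin (n+1)) ℂ, q.IsHomogeneous j ∧
      (∀ d ∈ q.support, d (Fin.last n) = 0) ∧
      β (Pi.single i 1) = q * X (Fin.last n) ^ (m - j) :=
    fun i => wcomp_struct hjm (hWj _)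
  choose q hqhom hqsupp hqeq using hq
  have hXpow : ∀ (a : Fin n) (e : ℕ),
      pderiv (Fin.castSucc a) ((X (Fin.last n) : MvPolynomial (Fin (n+1)) ℂ) ^ e) = 0 := by
    intro a e
    rw [pderiv_pow, pderiv_X_of_ne (Fin.castSucc_lt_last a).ne', mul_zero]
  have hsympq : ∀ a b : Fin n,
      pderiv (Fin.castSucc a) (q b) = pderiv (Fin.castSucc b) (q a) := by
    intro a b
    have h := hsym (Pi.single a 1) (Pi.single b 1)
    rw [rho_xiM_single, rho_xiM_single, hqeq, hqeq, pderiv_mul, pderiv_mul,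
      hXpow, hXpow, mul_zero, mul_zero, add_zero, add_zero] at h
    have h1 := mul_left_cancel₀ (X_ne_zero (R := ℂ) (Fin.last n)) h
    exact mul_right_cancel₀ (pow_ne_zero _ (X_ne_zero _)) h1
  refine ⟨∑ a : Fin n, X (Fin.castSucc a) * q a, ?_, ?_, ?_⟩
  · refine IsHomogeneous.sum _ _ _ fun a _ => ?_
    have h := (hqhom a).mul (isHomogeneous_X ℂ (Fin.castSucc a))
    rwa [mul_comm (q a)] at h
  · intro d hd
    have hd' := MvPolynomial.support_sum hd
    rw [Finset.mem_biUnion] at hd'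
    obtain ⟨a, _, ha⟩ := hd'
    have hd2 := MvPolynomial.support_mul _ _ ha
    rw [Finset.mem_add] at hd2
    obtain ⟨d1, hd1, d2, hd2, rfl⟩ := hd2
    rw [support_X] at hd1
    simp only [Finset.mem_singleton] at hd1
    subst hd1
    rw [Finsupp.add_apply, hqsupp a d2 hd2,
      Finsupp.single_eq_of_ne' (Fin.castSucc_lt_last a).ne]
  · intro i
    have hlastderiv : pderiv (Fin.last n) (q i) = 0 := by
      refine pderiv_eq_zero_of_notMem_vars ?_
      intro hmem
      obtain ⟨d, hd, hds⟩ := (mem_vars _).mp hmem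
      exact (Finsupp.mem_support_iff.mp hds) (hqsupp i d hd)
    have heuler := euler (hqhom i)
    rw [Fin.sum_univ_castSucc, hlastderiv, mul_zero, add_zero] at heuler
    have hderiv : pderiv (Fin.castSucc i) (∑ a : Fin n, X (Fin.castSucc a) * q a)
        = C ((j : ℂ) + 1) * q i := by
      rw [map_sum]
      have hterm : ∀ a ∈ Finset.univ, pderiv (Fin.castSucc i) (X (Fin.castSucc a) * q a)
          = (if a = i then q i else 0)
            + X (Fin.castSucc a) * pderiv (Fin.castSucc a) (q i) := by
        intro a _
        rw [pderiv_mul, hsympq i a]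
        congr 1
        by_cases h : a = i
        · subst h; rw [pderiv_X_self, one_mul, if_pos rfl]
        · rw [pderiv_X_of_ne (fun hc => h (Fin.castSucc_injective n hc)), zero_mul, if_neg h]
      rw [Finset.sum_congr rfl hterm, Finset.sum_add_distrib, Finset.sum_ite_eq' Finset.univ i,
        if_pos (Finset.mem_univ i), heuler, map_add, map_one]
      ring
    rw [hderiv, hqeq i, smul_eq_C_mul, mul_assoc]
end
end
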